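/- arXiv:0812.3933 — 6 statements merged into one kernel-verified Lean document; each statement's English description precedes it below -/
import Mathlib

section
/- For every permutation π = [π_0, π_1, …, π_{n+1}] and every prefix reversal β = β(1,j) with 3 ≤ j ≤ n+1, the number of breakpoints decreases by at most one, i.e., b(π) − b(π·β) ≤ 1. -/
/-- A permutation on `n` elements: a list `[π₀, π₁, …, π_{n+1}]` of distinct
naturals that is a rearrangement of `0, 1, …, n+1` with `π₀ = 0` and
`π_{n+1} = n+1`. -/
def IsPerm (n : ℕ) (π : List ℕ) : Prop :=
  π.Perm (List.range (n + 2)) ∧ π.getD 0 0 = 0 ∧ π.getD (n + 1) 0 = n + 1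

/-- Breakpoint count `b(π)`: `1` plus the number of indices `i` with
`2 ≤ i ≤ n+1` and `|π_i − π_{i−1}| ≠ 1` (these are exactly the consecutive
pairs of the tail `π₁, …, π_{n+1}`). -/
def bp (π : List ℕ) : ℕ :=
  1 + ((π.drop 1).zip (π.drop 2)).countP
        (fun p => !(p.1 + 1 == p.2 || p.2 + 1 == p.1))

/-- Redefined breakpoint count `b′(π)`: the number of indices `i` with
`1 ≤ i ≤ n+1` and `|π_i − π_{i−1}| ≠ 1`. -/
def bp' (π : List ℕ) : ℕ :=
  (π.zip (π.drop 1)).countP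
    (fun p => !(p.1 + 1 == p.2 || p.2 + 1 == p.1))

/-- Prefix reversal `β(1,j)`: `[π₀, π_{j−1}, …, π₁, π_j, …, π_{n+1}]`. -/
def prefixReversal (π : List ℕ) (j : ℕ) : List ℕ :=
  π.take 1 ++ ((π.drop 1).take (j - 1)).reverse ++ π.drop j

/-- Prefix transposition `τ(1,j,k)`:
`[π₀, π_j, …, π_{k−1}, π₁, …, π_{j−1}, π_k, …, π_{n+1}]`. -/
def prefixTransposition (π : List ℕ) (j k : ℕ) : List ℕ :=
  π.take 1 ++ (π.drop j).take (k - j) ++ (π.drop 1).take (j - 1) ++ π.drop k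

/-- Prefix transreversal `βτ(1,j,k)`:
`[π₀, π_j, …, π_{k−1}, π_{j−1}, …, π₁, π_k, …, π_{n+1}]`. -/
def prefixTransreversal (π : List ℕ) (j k : ℕ) : List ℕ :=
  π.take 1 ++ (π.drop j).take (k - j) ++ ((π.drop 1).take (j - 1)).reverse ++ π.drop k

/-- A prefix operation: a prefix reversal, a prefix transposition, or a
prefix transreversal. -/
inductive PrefOp
  | rev (j : ℕ)
  | trans (j k : ℕ)
  | transrev (j k : ℕ)

/-- Apply a prefix operation to a permutation. -/
def PrefOp.apply (π : List ℕ) : PrefOp → List ℕ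
  | .rev j => prefixReversal π j
  | .trans j k => prefixTransposition π j k
  | .transrev j k => prefixTransreversal π j k

/-- Validity of a prefix operation on a permutation of `n` elements:
`3 ≤ j ≤ n+1` for a prefix reversal, `2 ≤ j < k ≤ n+1` for a prefix
transposition or a prefix transreversal. -/
def PrefOp.Valid (n : ℕ) : PrefOp → Prop
  | .rev j => 3 ≤ j ∧ j ≤ n + 1
  | .trans j k => 2 ≤ j ∧ j < k ∧ k ≤ n + 1
  | .transrev j k => 2 ≤ j ∧ j < k ∧ k ≤ n + 1

/-- Is the operation a prefix reversal? -/
def PrefOp.isRev : PrefOp → Bool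
  | .rev _ => true
  | _ => false

/-- Is the operation a prefix transreversal? -/
def PrefOp.isTransrev : PrefOp → Bool
  | .transrev _ _ => true
  | _ => false

/-- Apply a sequence of prefix operations, left to right. -/
def applySeq : List ℕ → List PrefOp → List ℕ
  | π, [] => π
  | π, o :: os => applySeq (o.apply π) os

/-- All operations in the sequence are valid for permutations of `n` elements. -/
def ValidSeq (n : ℕ) (ops : List PrefOp) : Prop :=
  ∀ o ∈ ops, o.Valid n

/-- `fm π` is `m(π) + 1`, where `m(π)` is the largest index `m` such that
`π_i = i` for all `0 ≤ i ≤ m`; i.e. the length of the longest already-sorted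
prefix of `π`. -/
def fm (π : List ℕ) : ℕ :=
  ((List.range π.length).takeWhile (fun i => π.getD i 0 == i)).length

/-- Forward-march prefix reversal: reverses the segment
`π_{m(π)+1}, …, π_{j−1}` in place. -/
def fmPrefixReversal (π : List ℕ) (j : ℕ) : List ℕ :=
  π.take (fm π) ++ ((π.drop (fm π)).take (j - fm π)).reverse ++ π.drop j

/-- Forward-march prefix transposition: cuts the segment
`π_{m(π)+1}, …, π_{j−1}` and pastes it between `π_{k−1}` and `π_k`. -/
def fmPrefixTransposition (π : List ℕ) (j k : ℕ) : List ℕ :=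
  π.take (fm π) ++ (π.drop j).take (k - j) ++
    (π.drop (fm π)).take (j - fm π) ++ π.drop k

/-- A forward-march operation: an FM prefix reversal or an FM prefix
transposition. -/
inductive FMOp
  | rev (j : ℕ)
  | trans (j k : ℕ)

/-- Apply a forward-march operation. -/
def FMOp.apply (π : List ℕ) : FMOp → List ℕ
  | .rev j => fmPrefixReversal π j
  | .trans j k => fmPrefixTransposition π j k

/-- Validity of a forward-march operation on a permutation `π` of `n`
elements: `m(π)+3 ≤ j ≤ n+1` for an FM prefix reversal, and
`m(π)+2 ≤ j ≤ n`, `j < k ≤ n+1` for an FM prefix transposition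
(recall `fm π = m(π) + 1`). -/
def FMOp.Valid (n : ℕ) (π : List ℕ) : FMOp → Prop
  | .rev j => fm π + 2 ≤ j ∧ j ≤ n + 1
  | .trans j k => fm π + 1 ≤ j ∧ j ≤ n ∧ j < k ∧ k ≤ n + 1

/-- Is the forward-march operation an FM prefix reversal? -/
def FMOp.isRev : FMOp → Bool
  | .rev _ => true
  | _ => false

/-- Apply a sequence of forward-march operations, left to right. -/
def applyFMSeq : List ℕ → List FMOp → List ℕ
  | π, [] => π
  | π, o :: os => applyFMSeq (o.apply π) os

/-- Validity of a sequence of forward-march operations, where each operation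
must be valid for the permutation obtained after applying the previous ones. -/
def FMValidSeq (n : ℕ) : List ℕ → List FMOp → Prop
  | _, [] => True
  | π, o :: os => o.Valid n π ∧ FMValidSeq n (o.apply π) os


/-- auxiliary predicate -/
def prP : ℕ × ℕ → Bool := fun p => !(p.1 + 1 == p.2 || p.2 + 1 == p.1)

lemma prP_swap (a b : ℕ) : prP (a, b) = prP (b, a) := by
  simp [prP, Bool.or_comm]

/-- adjacent pairs -/
def pairs (l : List ℕ) : List (ℕ × ℕ) := l.zip (l.drop 1)

lemma pairs_append (X : List ℕ) (hX : X ≠ []) (y : ℕ) (Y : List ℕ) :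
    pairs (X ++ y :: Y) = pairs X ++ (X.getLast hX, y) :: pairs (y :: Y) := by
  induction X with
  | nil => simp at hX
  | cons a X ih =>
    cases X with
    | nil => simp [pairs]
    | cons b X =>
      have := ih (by simp)
      simp only [pairs, List.cons_append] at this ⊢
      simp_all [List.getLast]

lemma countP_pairs_reverse (l : List ℕ) :
    (pairs l.reverse).countP prP = (pairs l).countP prP := by
  induction l with
  | nil => rfl
  | cons a l ih =>
    cases l with
    | nil => rfl
    | cons b l' =>
      have hne : (b :: l').reverse ≠ [] := by simp
      have hrev : (a :: b :: l').reverse = (b :: l').reverse ++ a :: [] := by simp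
      rw [hrev, pairs_append _ hne]
      have hlast : ((b :: l').reverse).getLast hne = b := by
        rw [List.getLast_reverse]; rfl
      rw [hlast]
      simp only [List.countP_append, ih]
      have h3 : pairs (a :: b :: l') = (a, b) :: pairs (b :: l') := rfl
      rw [h3]
      simp [pairs, List.countP_cons, prP_swap a b]
      try ring
      try omega

lemma countP_pairs_append (X : List ℕ) (hX : X ≠ []) (y : ℕ) (Y : List ℕ) :
    (pairs (X ++ y :: Y)).countP prP =
      (pairs X).countP prP + (if prP (X.getLast hX, y) then 1 else 0)
        + (pairs (y :: Y)).countP prP := by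
  rw [pairs_append X hX y Y, List.countP_append, List.countP_cons]
  ring

/-- a prefix reversal removes at most one breakpoint. -/
theorem prefixReversal_removes_at_most_one_breakpoint
    (n : ℕ) (π : List ℕ) (hπ : IsPerm n π)
    (j : ℕ) (hj1 : 3 ≤ j) (hj2 : j ≤ n + 1) :
    bp π - bp (prefixReversal π j) ≤ 1 := by
  -- setup
  obtain ⟨hperm, -, -⟩ := hπ
  have hlen : π.length = n + 2 := by
    have := hperm.length_eq; simpa using this
  set t : List ℕ := π.drop 1 with ht
  have hlt : t.length = n + 1 := by simp [ht, hlen]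
  set A : List ℕ := t.take (j - 1) with hA
  set B : List ℕ := t.drop (j - 1) with hB
  have hAB : t = A ++ B := (List.take_append_drop _ _).symm
  have hAlen : A.length = j - 1 := by
    simp [hA, hlt]; omega
  have hAne : A ≠ [] := by
    intro h; rw [h] at hAlen; simp at hAlen; omega
  have hBne : B ≠ [] := by
    intro h
    have : B.length = 0 := by rw [h]; rfl
    simp [hB, hlt] at this; omega
  obtain ⟨b0, B', hB'⟩ := List.exists_cons_of_ne_nil hBne
  have hdropj : π.drop j = B := by
    rw [hB, ht, List.drop_drop]
    congr 1; omega
  -- bp π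
  have hbp1 : bp π = 1 + (pairs (A ++ b0 :: B')).countP prP := by
    have h2 : π.drop 2 = t.drop 1 := by rw [ht, List.drop_drop]
    simp only [bp, pairs, prP, h2, ← ht]
    rw [hAB, hB']
    rfl
  -- the reversed permutation
  have htake1 : (π.take 1).length = 1 := by
    simp [hlen]
  have hσ : prefixReversal π j = π.take 1 ++ (A.reverse ++ b0 :: B') := by
    simp only [prefixReversal, ← ht, hdropj, hB', hA, List.append_assoc]
  have hσdrop : (prefixReversal π j).drop 1 = A.reverse ++ b0 :: B' := by
    rw [hσ, List.drop_left' htake1]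
  have hbp2 : bp (prefixReversal π j) = 1 + (pairs (A.reverse ++ b0 :: B')).countP prP := by
    have h2 : (prefixReversal π j).drop 2 = ((prefixReversal π j).drop 1).drop 1 := by
      rw [List.drop_drop]
    simp only [bp, pairs, prP, h2, hσdrop]
    rfl
  have hArne : A.reverse ≠ [] := by simpa using hAne
  have hlastrev : A.reverse.getLast hArne = A.head hAne := by
    rw [List.getLast_reverse]
  -- counts
  rw [hbp1, hbp2,
    countP_pairs_append A hAne b0 B',
    countP_pairs_append A.reverse hArne b0 B',
    hlastrev]
  have hrev : (pairs A.reverse).countP prP = (pairs A).countP prP := countP_pairs_reverse A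
  rw [hrev]
  split <;> split <;> omega
end

section
/- For every permutation π = [π_0, π_1, …, π_{n+1}] and every prefix transposition τ = τ(1,j,k) with 2 ≤ j < k ≤ n+1, the number of breakpoints decreases by at most two, i.e., b(π) − b(π·τ) ≤ 2. -/
lemma zip_tail_append (x y : List ℕ) (hx : x ≠ []) (hy : y ≠ []) :
    (x ++ y).zip ((x ++ y).tail) =
      x.zip x.tail ++ (x.getLastD 0, y.headD 0) :: y.zip y.tail := by
  induction x with
  | nil => exact absurd rfl hx
  | cons a xs ih =>
    cases xs with
    | nil =>
      cases y with
      | nil => exact absurd rfl hy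
      | cons b ys => simp
    | cons b xs' =>
      have h := ih (by simp)
      simp only [List.cons_append, List.tail_cons, List.zip_cons_cons] at *
      rw [h]
      simp

lemma countP_zip_append_le (x y : List ℕ) (hx : x ≠ []) (hy : y ≠ [])
    (p : ℕ × ℕ → Bool) :
    List.countP p ((x ++ y).zip ((x ++ y).tail)) ≤
      List.countP p (x.zip x.tail) + List.countP p (y.zip y.tail) + 1 := by
  rw [zip_tail_append x y hx hy, List.countP_append, List.countP_cons]
  split <;> omega

lemma le_countP_zip_append (x y : List ℕ) (hx : x ≠ []) (hy : y ≠ [])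
    (p : ℕ × ℕ → Bool) :
    List.countP p (x.zip x.tail) + List.countP p (y.zip y.tail) ≤
      List.countP p ((x ++ y).zip ((x ++ y).tail)) := by
  rw [zip_tail_append x y hx hy, List.countP_append, List.countP_cons]
  split <;> omega

/-- a prefix transposition removes at most two breakpoints. -/
theorem prefixTransposition_removes_at_most_two_breakpoints
    (n : ℕ) (π : List ℕ) (hπ : IsPerm n π)
    (j k : ℕ) (hj : 2 ≤ j) (hjk : j < k) (hk : k ≤ n + 1) :
    bp π - bp (prefixTransposition π j k) ≤ 2 := by
  obtain ⟨hperm, -, -⟩ := hπ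
  have hlen : π.length = n + 2 := by simpa using hperm.length_eq
  set B := (π.drop 1).take (j - 1) with hB
  set C := (π.drop j).take (k - j) with hC
  set D := π.drop k with hD
  have hBne : B ≠ [] := by
    rw [← List.length_pos_iff, hB, List.length_take, List.length_drop, hlen]; omega
  have hCne : C ≠ [] := by
    rw [← List.length_pos_iff, hC, List.length_take, List.length_drop, hlen]; omega
  have hDne : D ≠ [] := by
    rw [← List.length_pos_iff, hD, List.length_drop, hlen]; omega
  have hdj : π.drop j = C ++ D := by
    conv_lhs => rw [← List.take_append_drop (k - j) (π.drop j)]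
    rw [List.drop_drop, show j + (k - j) = k from by omega]
  have hT : π.drop 1 = B ++ (C ++ D) := by
    conv_lhs => rw [← List.take_append_drop (j - 1) (π.drop 1)]
    rw [List.drop_drop, show 1 + (j - 1) = j from by omega, hdj]
  have hτ : (prefixTransposition π j k).drop 1 = C ++ (B ++ D) := by
    have ht1 : (π.take 1).length = 1 := by
      rw [List.length_take, hlen]; omega
    rw [prefixTransposition, List.append_assoc, List.append_assoc,
      List.drop_left' ht1]
  have hd2 : ∀ l : List ℕ, l.drop 2 = (l.drop 1).tail := by
    intro l
    rw [← List.drop_one, List.drop_drop]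
  rw [bp, bp, hd2, hd2, hτ, hT]
  set p : ℕ × ℕ → Bool := fun q => !(q.1 + 1 == q.2 || q.2 + 1 == q.1) with hp
  have h1 := countP_zip_append_le B (C ++ D) hBne (by simp [hCne]) p
  have h2 := countP_zip_append_le C D hCne hDne p
  have h3 := le_countP_zip_append C (B ++ D) hCne (by simp [hBne]) p
  have h4 := le_countP_zip_append B D hBne hDne p
  rw [zip_tail_append C D hCne hDne, List.countP_append] at h1
  rw [zip_tail_append B D hBne hDne, List.countP_append] at h3
  rw [List.countP_cons] at h1 h3
  split at h1 <;> split at h3 <;> omega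
end

section
/- For every permutation π, the prefix reversal and prefix transposition distance satisfies d_RT(π) ≥ ⌊b(π)/2⌋; equivalently, every sequence of prefix reversals and prefix transpositions transforming π into the identity permutation has length at least ⌊b(π)/2⌋. -/
/-- The breakpoint predicate. -/
def pB : ℕ × ℕ → Bool := fun p => !(p.1 + 1 == p.2 || p.2 + 1 == p.1)

/-- Count of breakpoints among consecutive pairs of a list. -/
def cnt (l : List ℕ) : ℕ := (l.zip l.tail).countP pB

lemma pB_symm (a b : ℕ) : pB (a, b) = pB (b, a) := by
  simp [pB, Bool.or_comm]

lemma cnt_nil : cnt ([] : List ℕ) = 0 := rfl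

lemma cnt_single (a : ℕ) : cnt [a] = 0 := rfl

lemma cnt_cons_cons (a b : ℕ) (l : List ℕ) :
    cnt (a :: b :: l) = (if pB (a, b) then 1 else 0) + cnt (b :: l) := by
  simp [cnt, List.countP_cons]
  omega

lemma le_cnt_append (A B : List ℕ) : cnt A + cnt B ≤ cnt (A ++ B) := by
  induction A with
  | nil => simp [cnt_nil]
  | cons a A ih =>
    cases A with
    | nil =>
      cases B with
      | nil => simp [cnt_nil, cnt_single]
      | cons b B' =>
        simp only [List.singleton_append, cnt_cons_cons, cnt_single]
        omega
    | cons a' A' =>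
      have h : (a :: a' :: A') ++ B = a :: a' :: (A' ++ B) := rfl
      rw [h, cnt_cons_cons, cnt_cons_cons]
      have := ih
      simp only [List.cons_append] at this ⊢
      omega

lemma cnt_append_le (A B : List ℕ) : cnt (A ++ B) ≤ cnt A + cnt B + 1 := by
  induction A with
  | nil => simp [cnt_nil]
  | cons a A ih =>
    cases A with
    | nil =>
      cases B with
      | nil => simp [cnt_nil, cnt_single]
      | cons b B' =>
        simp only [List.singleton_append, cnt_cons_cons, cnt_single]
        split <;> omega
    | cons a' A' =>
      have h : (a :: a' :: A') ++ B = a :: a' :: (A' ++ B) := rfl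
      rw [h, cnt_cons_cons, cnt_cons_cons]
      simp only [List.cons_append] at ih ⊢
      omega

lemma cnt_snoc (l : List ℕ) (a : ℕ) :
    cnt (l ++ [a]) =
      cnt l + (match l.getLast? with
               | none => 0
               | some b => if pB (b, a) then 1 else 0) := by
  induction l with
  | nil => simp [cnt_nil, cnt_single]
  | cons b l ih =>
    cases l with
    | nil =>
      simp [cnt_cons_cons, cnt_single]
    | cons c l' =>
      have h : (b :: c :: l') ++ [a] = b :: ((c :: l') ++ [a]) := rfl
      rw [h]
      have h2 : (c :: l') ++ [a] = c :: (l' ++ [a]) := rfl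
      rw [h2, cnt_cons_cons, ← h2, ih, cnt_cons_cons, List.getLast?_cons_cons]
      omega

lemma cnt_reverse (l : List ℕ) : cnt l.reverse = cnt l := by
  induction l with
  | nil => rfl
  | cons a l ih =>
    rw [List.reverse_cons, cnt_snoc, List.getLast?_reverse, ih]
    cases l with
    | nil => simp [cnt_nil, cnt_single]
    | cons b l' =>
      rw [cnt_cons_cons]
      simp only [List.head?_cons]
      rw [pB_symm]
      omega

lemma bp_eq (π : List ℕ) : bp π = 1 + cnt (π.drop 1) := by
  have h : (π.drop 1).tail = π.drop 2 := by
    rw [List.tail_drop]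
  simp only [bp, cnt, h]
  rfl

lemma cnt_range' (s m : ℕ) : cnt (List.range' s m) = 0 := by
  induction m generalizing s with
  | zero => rfl
  | succ m ih =>
    cases m with
    | zero => simp [cnt_single]
    | succ m' =>
      rw [List.range'_succ, List.range'_succ, cnt_cons_cons, ← List.range'_succ,
        ih (s + 1)]
      simp [pB]

lemma bp_range (m : ℕ) : bp (List.range m) = 1 := by
  rw [bp_eq]
  have h1 : cnt ((List.range m).drop 1) + cnt ((List.range m).take 1) ≤
      cnt (List.range m) := by
    have := le_cnt_append ((List.range m).take 1) ((List.range m).drop 1)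
    rw [List.take_append_drop] at this
    omega
  have h2 : cnt (List.range m) = 0 := by
    rw [List.range_eq_range']; exact cnt_range' 0 m
  omega

lemma bp_rev_le (a : ℕ) (t : List ℕ) (j : ℕ) (hj : 1 ≤ j) :
    bp (a :: t) ≤ bp (prefixReversal (a :: t) j) + 2 := by
  obtain ⟨m, rfl⟩ : ∃ m, j = m + 1 := ⟨j - 1, by omega⟩
  have hres : prefixReversal (a :: t) (m + 1) =
      a :: ((t.take m).reverse ++ t.drop m) := by
    simp [prefixReversal]
  rw [hres, bp_eq, bp_eq]
  simp only [List.drop_one, List.tail_cons]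
  have h1 : cnt t ≤ cnt (t.take m) + cnt (t.drop m) + 1 := by
    have := cnt_append_le (t.take m) (t.drop m)
    rw [List.take_append_drop] at this
    exact this
  have h2 : cnt ((t.take m).reverse) + cnt (t.drop m) ≤
      cnt ((t.take m).reverse ++ t.drop m) := le_cnt_append _ _
  rw [cnt_reverse] at h2
  omega

lemma bp_trans_le (a : ℕ) (t : List ℕ) (j k : ℕ) (hj : 1 ≤ j) (hjk : j ≤ k) :
    bp (a :: t) ≤ bp (prefixTransposition (a :: t) j k) + 2 := by
  obtain ⟨m, rfl⟩ : ∃ m, j = m + 1 := ⟨j - 1, by omega⟩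
  set A := t.take m with hA
  set D := t.drop m with hD
  set B := D.take (k - (m + 1)) with hB
  set C := D.drop (k - (m + 1)) with hC
  have hdropk : (a :: t).drop k = C := by
    obtain ⟨l, rfl⟩ : ∃ l, k = l + 1 := ⟨k - 1, by omega⟩
    have : (a :: t).drop (l + 1) = t.drop l := rfl
    rw [this, hC, hD, List.drop_drop]
    congr 1
    omega
  have hres : prefixTransposition (a :: t) (m + 1) k =
      a :: (B ++ (A ++ C)) := by
    simp only [prefixTransposition, hdropk]
    simp [hA, hB, hD]
  have htBC : t = A ++ (B ++ C) := by
    rw [hA, hB, hC, hD, List.take_append_drop, List.take_append_drop]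
  rw [hres, bp_eq, bp_eq]
  simp only [List.drop_one, List.tail_cons]
  have h1 : cnt t ≤ cnt A + (cnt B + cnt C + 1) + 1 := by
    calc cnt t = cnt (A ++ (B ++ C)) := by rw [← htBC]
      _ ≤ cnt A + cnt (B ++ C) + 1 := cnt_append_le _ _
      _ ≤ cnt A + (cnt B + cnt C + 1) + 1 := by
          have := cnt_append_le B C; omega
  have h2 : cnt B + (cnt A + cnt C) ≤ cnt (B ++ (A ++ C)) := by
    calc cnt B + (cnt A + cnt C) ≤ cnt B + cnt (A ++ C) := by
          have := le_cnt_append A C; omega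
      _ ≤ cnt (B ++ (A ++ C)) := le_cnt_append _ _
  omega

lemma apply_ne_nil (π : List ℕ) (hπ : π ≠ []) (o : PrefOp) :
    o.apply π ≠ [] := by
  obtain ⟨a, t, rfl⟩ := List.exists_cons_of_ne_nil hπ
  cases o <;> simp [PrefOp.apply, prefixReversal, prefixTransposition,
    prefixTransreversal]

lemma seq_bound (n : ℕ) (ops : List PrefOp) :
    ∀ (π : List ℕ), π ≠ [] → ValidSeq n ops →
      (∀ o ∈ ops, o.isTransrev = false) →
      bp π ≤ 2 * ops.length + bp (applySeq π ops) := by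
  induction ops with
  | nil => intro π _ _ _; simp [applySeq]
  | cons o os ih =>
    intro π hne hval hkind
    obtain ⟨a, t, rfl⟩ := List.exists_cons_of_ne_nil hne
    have hvo : o.Valid n := hval o (by simp)
    have hstep : bp (a :: t) ≤ bp (o.apply (a :: t)) + 2 := by
      cases o with
      | rev j =>
        exact bp_rev_le a t j (by obtain ⟨h1, h2⟩ := hvo; omega)
      | trans j k =>
        obtain ⟨h1, h2, h3⟩ := hvo
        exact bp_trans_le a t j k (by omega) (by omega)
      | transrev j k =>
        have := hkind _ List.mem_cons_self
        simp [PrefOp.isTransrev] at this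
    have htail := ih (o.apply (a :: t)) (apply_ne_nil _ (by simp) o)
      (fun o' ho' => hval o' (by simp [ho']))
      (fun o' ho' => hkind o' (by simp [ho']))
    have : applySeq (a :: t) (o :: os) = applySeq (o.apply (a :: t)) os := rfl
    rw [this]
    simp only [List.length_cons]
    omega

/-- every sequence of prefix reversals and prefix transpositions
sorting `π` has length at least `⌊b(π)/2⌋`. -/
theorem sortRT_length_lower_bound
    (n : ℕ) (π : List ℕ) (hπ : IsPerm n π)
    (ops : List PrefOp) (hval : ValidSeq n ops)
    (hkind : ∀ o ∈ ops, o.isTransrev = false)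
    (hsort : applySeq π ops = List.range (n + 2)) :
    bp π / 2 ≤ ops.length := by
  have hne : π ≠ [] := by
    intro h
    have := hπ.1.length_eq
    simp [h] at this
  have hb := seq_bound n ops π hne hval hkind
  rw [hsort, bp_range] at hb
  omega
end

section
/- (Trapped black edge) Let π = [π_0, π_1, …, π_{n+1}] be a permutation and let j be an index with 3 ≤ j ≤ n+1 such that |π_1 − π_j| = 1. Then there exists an index i with 2 ≤ i ≤ j such that |π_i − π_{i−1}| ≠ 1 (i.e., there is a breakpoint strictly inside the segment from position 1 to position j). -/
/-- trapped black edge: if `|π₁ − π_j| = 1` for some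
`3 ≤ j ≤ n+1`, then there is a breakpoint strictly inside the segment from
position `1` to position `j`. -/
theorem trapped_black_edge
    (n : ℕ) (π : List ℕ) (hπ : IsPerm n π)
    (j : ℕ) (hj1 : 3 ≤ j) (hj2 : j ≤ n + 1)
    (hgrey : π.getD 1 0 + 1 = π.getD j 0 ∨ π.getD j 0 + 1 = π.getD 1 0) :
    ∃ i, 2 ≤ i ∧ i ≤ j ∧
      ¬(π.getD (i - 1) 0 + 1 = π.getD i 0 ∨ π.getD i 0 + 1 = π.getD (i - 1) 0) := by
  by_contra hcon
  push_neg at hcon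
  have hlen : π.length = n + 2 := by
    have := hπ.1.length_eq; simpa using this
  have hnd : π.Nodup := hπ.1.nodup_iff.mpr List.nodup_range
  set f : ℕ → ℕ := fun i => π.getD i 0 with hf
  have hinj : ∀ a b, a < π.length → b < π.length → f a = f b → a = b := by
    intro a b ha hb hab
    have h1 : π.getD a 0 = π[a] := List.getD_eq_getElem π 0 ha
    have h2 : π.getD b 0 = π[b] := List.getD_eq_getElem π 0 hb
    have : π[a] = π[b] := by rw [← h1, ← h2]; exact hab
    exact (List.Nodup.getElem_inj_iff hnd).mp this
  have hadj : ∀ i, 2 ≤ i → i ≤ j → f (i-1) + 1 = f i ∨ f i + 1 = f (i-1) := by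
    intro i h1 h2
    rcases hcon i h1 h2 with h
    exact h
  have h2j : (2:ℕ) ≤ j := by omega
  rcases hadj 2 le_rfl h2j with hup | hdown
  · -- increasing case: f i = f 1 + (i - 1) for 1 ≤ i ≤ j
    have key : ∀ i, 1 ≤ i → i ≤ j → f i = f 1 + (i - 1) := by
      intro i
      induction i using Nat.strong_induction_on with
      | _ i ih =>
        intro h1 h2
        match i, h1 with
        | 1, _ => simp
        | 2, _ => simp at hup ⊢; omega
        | (m+3), _ =>
          have hm2 : f (m+2) = f 1 + (m+1) := ih (m+2) (by omega) (by omega) (by omega)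
          have hm1 : f (m+1) = f 1 + m := ih (m+1) (by omega) (by omega) (by omega)
          rcases hadj (m+3) (by omega) h2 with h | h
          · simp at h ⊢; omega
          · exfalso
            have : f (m+3) = f (m+1) := by simp at h; omega
            have := hinj (m+3) (m+1) (by omega) (by omega) this
            omega
    have hj := key j (by omega) le_rfl
    simp only [hf] at hj hgrey
    omega
  · -- decreasing case: f i + (i-1) = f 1 for 1 ≤ i ≤ j
    have key : ∀ i, 1 ≤ i → i ≤ j → f i + (i - 1) = f 1 := by
      intro i
      induction i using Nat.strong_induction_on with
      | _ i ih =>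
        intro h1 h2
        match i, h1 with
        | 1, _ => simp
        | 2, _ => simp at hdown ⊢; omega
        | (m+3), _ =>
          have hm2 : f (m+2) + (m+1) = f 1 := ih (m+2) (by omega) (by omega) (by omega)
          have hm1 : f (m+1) + m = f 1 := ih (m+1) (by omega) (by omega) (by omega)
          rcases hadj (m+3) (by omega) h2 with h | h
          · exfalso
            have : f (m+3) = f (m+1) := by simp at h; omega
            have := hinj (m+3) (m+1) (by omega) (by omega) this
            omega
          · simp at h ⊢; omega
    have hj := key j (by omega) le_rfl
    simp only [hf] at hj hgrey
    omega
end

section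
/- Let π = [π_0, π_1, …, π_{n+1}] be a permutation and let m ≥ 1 be such that π_i = i for all 0 ≤ i ≤ m. Suppose there is an index j with m+2 ≤ j ≤ n+1 such that π_j = m+1 and |π_j − π_{j−1}| ≠ 1. Then the prefix transposition τ(1, m+1, j) removes at least one breakpoint, i.e., b(π·τ(1,m+1,j)) ≤ b(π) − 1. -/
namespace BPAux

def f : ℕ × ℕ → Bool := fun p => !(p.1 + 1 == p.2 || p.2 + 1 == p.1)

lemma bp'_def (l : List ℕ) : bp' l = (l.zip (l.drop 1)).countP f := rfl

lemma bp'_nil : bp' [] = 0 := rfl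
lemma bp'_single (a : ℕ) : bp' [a] = 0 := rfl

lemma bp'_cons_cons (a b : ℕ) (l : List ℕ) :
    bp' (a :: b :: l) = bp' (b :: l) + if f (a, b) then 1 else 0 := by
  simp [bp'_def, List.zip, List.countP_cons]

lemma bp'_split (l1 : List ℕ) (y : ℕ) (l2 : List ℕ) :
    bp' (l1 ++ y :: l2) = bp' (l1 ++ [y]) + bp' (y :: l2) := by
  induction l1 with
  | nil => simp [bp'_single]
  | cons a t ih =>
    cases t with
    | nil =>
      simp only [List.cons_append, List.nil_append, bp'_cons_cons, bp'_single]
      omega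
    | cons b t' =>
      simp only [List.cons_append, bp'_cons_cons] at *
      omega

lemma bp'_range' (s k : ℕ) : bp' (List.range' s k) = 0 := by
  induction k generalizing s with
  | zero => rfl
  | succ k ih =>
    rw [List.range'_succ]
    cases k with
    | zero => rfl
    | succ k' =>
      rw [List.range'_succ, bp'_cons_cons, ← List.range'_succ, ih (s+1)]
      simp [f]

lemma bp'_pair (a b : ℕ) : bp' [a, b] = if f (a, b) then 1 else 0 := by
  rw [bp'_cons_cons]; simp [bp'_single]

lemma bp_eq (l : List ℕ) : bp l = 1 + bp' (l.drop 1) := by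
  simp [bp, bp', List.drop_drop]

end BPAux


/-- if `π_i = i` for all `0 ≤ i ≤ m` (with `m ≥ 1`) and `π_j = m+1`
with a breakpoint at position `j` for some `m+2 ≤ j ≤ n+1`, then the prefix
transposition `τ(1, m+1, j)` removes at least one breakpoint. -/
theorem prefixTransposition_extends_sorted_prefix
    (n : ℕ) (π : List ℕ) (hπ : IsPerm n π)
    (m j : ℕ) (hm : 1 ≤ m)
    (hsorted : ∀ i ≤ m, π.getD i 0 = i)
    (hj1 : m + 2 ≤ j) (hj2 : j ≤ n + 1)
    (hval : π.getD j 0 = m + 1)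
    (hbp : ¬(π.getD (j - 1) 0 + 1 = π.getD j 0 ∨ π.getD j 0 + 1 = π.getD (j - 1) 0)) :
    bp (prefixTransposition π (m + 1) j) ≤ bp π - 1 := by
  classical
  obtain ⟨hperm, h0, hlast⟩ := hπ
  have hlen : π.length = n + 2 := by
    rw [hperm.length_eq, List.length_range]
  have hnd : π.Nodup := hperm.nodup_iff.mpr List.nodup_range
  have hjlt : j < π.length := by omega
  have hvalE : π[j]'hjlt = m + 1 := by
    rw [← List.getD_eq_getElem π 0 hjlt]; exact hval
  have hsE : ∀ i, i ≤ m → ∀ (h : i < π.length), π[i]'h = i := by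
    intro i hi h
    rw [← List.getD_eq_getElem π 0 h]; exact hsorted i hi
  obtain ⟨D, hD⟩ : ∃ D, D = π.drop (j+1) := ⟨_, rfl⟩
  obtain ⟨A, hA⟩ : ∃ A, A = (π.drop (m+1)).take (j - (m+1)) := ⟨_, rfl⟩
  have hAlen : A.length = j - (m+1) := by
    rw [hA]; simp [hlen]; omega
  have hdropj : π.drop j = (m+1) :: D := by
    rw [List.drop_eq_getElem_cons hjlt, hvalE, ← hD]
  have hdropm : π.drop (m+1) = A ++ (m+1) :: D := by
    conv_lhs => rw [← List.take_append_drop (j - (m+1)) (π.drop (m+1))]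
    rw [List.drop_drop, show m + 1 + (j - (m+1)) = j by omega, hdropj, ← hA]
  have htake : π.take (m+1) = List.range' 0 (m+1) := by
    apply List.ext_getElem
    · simp [hlen]; omega
    · intro i h1 h2
      rw [List.getElem_take, List.getElem_range']
      simp only [Nat.zero_add, Nat.one_mul]
      exact hsE i (by simp [hlen] at h1; omega) _
  have hπeq : π = List.range' 0 (m+1) ++ (A ++ (m+1) :: D) := by
    conv_lhs => rw [← List.take_append_drop (m+1) π, htake, hdropm]
  have hr0 : List.range' 0 (m+1) = 0 :: List.range' 1 m := List.range'_succ
  have hdrop1 : π.drop 1 = List.range' 1 m ++ (A ++ (m+1) :: D) := by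
    conv_lhs => rw [hπeq, hr0]
    simp
  have htake1 : π.take 1 = [0] := by
    conv_lhs => rw [hπeq, hr0]
    simp
  have htakem : (π.drop 1).take m = List.range' 1 m := by
    rw [hdrop1]
    exact List.take_left' (by simp)
  have hπ'eq : prefixTransposition π (m + 1) j
      = [0] ++ (A ++ (List.range' 1 m ++ (m+1) :: D)) := by
    unfold prefixTransposition
    rw [htake1, ← hA, show m + 1 - 1 = m by omega, htakem, hdropj]
    simp [List.append_assoc]
  -- structure of A
  have hAne : A ≠ [] := by
    intro h; rw [h] at hAlen; simp at hAlen; omega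
  obtain ⟨a0, A', hA0⟩ := List.exists_cons_of_ne_nil hAne
  obtain ⟨A'', aL, hA2⟩ := A.eq_nil_or_concat.resolve_left hAne
  have hAget : ∀ k, k < j - (m+1) → A.getD k 0 = π.getD (m+1+k) 0 := by
    intro k h
    rw [hA, List.getD_eq_getElem (n := k) _ 0 (by simp [hlen]; omega),
      List.getD_eq_getElem (n := m+1+k) π 0 (by omega), List.getElem_take, List.getElem_drop]
  have ha0 : π.getD (m+1) 0 = a0 := by
    have h2 := hAget 0 (by omega)
    rw [hA0] at h2
    simpa using h2.symm
  have hlenA'' : A''.length = j - (m+1) - 1 := by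
    have : A.length = A''.length + 1 := by rw [hA2]; simp
    omega
  have haL : π.getD (j-1) 0 = aL := by
    have h1 := hAget (j - (m+1) - 1) (by omega)
    rw [show m + 1 + (j - (m+1) - 1) = j - 1 by omega] at h1
    rw [← h1, show j - (m+1) - 1 = A''.length by omega, hA2, List.concat_eq_append,
      List.getD_eq_getElem (n := A''.length) _ 0 (by simp), List.getElem_concat_length]
    rfl
  have hfbp : BPAux.f (aL, m + 1) = true := by
    rw [hval, haL] at hbp
    simp [BPAux.f]
    omega
  have hb1 : m + 1 < π.length := by omega
  have hbm : m - 1 < π.length := by omega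
  have ha0E : π[m+1]'hb1 = a0 := by
    rw [← List.getD_eq_getElem (n := m+1) π 0 hb1]; exact ha0
  have hne1 : a0 ≠ m + 1 := by
    intro h
    have he : π[m+1]'hb1 = π[j]'hjlt := by rw [hvalE, ha0E, h]
    rw [hnd.getElem_inj_iff] at he
    omega
  have hne2 : a0 + 1 ≠ m := by
    intro h
    have hm1 : π[m-1]'hbm = m - 1 := hsE (m-1) (by omega) hbm
    have he : π[m+1]'hb1 = π[m-1]'hbm := by rw [hm1, ha0E]; omega
    rw [hnd.getElem_inj_iff] at he
    omega
  have hfm : BPAux.f (m, a0) = true := by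
    simp [BPAux.f]
    omega
  -- range' splittings
  have hr1 : List.range' 1 m = List.range' 1 (m-1) ++ [m] := by
    conv_lhs => rw [show m = (m-1)+1 by omega, List.range'_concat]
    congr 2
    omega
  have hr2 : List.range' 1 m ++ [m+1] = List.range' 1 (m+1) := by
    rw [List.range'_concat]
    congr 2
    omega
  have hr3 : List.range' 1 m = 1 :: List.range' 2 (m-1) := by
    conv_lhs => rw [show m = (m-1)+1 by omega, List.range'_succ]
  obtain ⟨T, hT⟩ : ∃ T, T = bp' ((m+1) :: D) := ⟨_, rfl⟩
  -- component computations
  have c1 : bp' (List.range' 1 m ++ [a0]) = 1 := by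
    rw [hr1, List.append_assoc, List.singleton_append, BPAux.bp'_split, ← hr1,
      BPAux.bp'_range', BPAux.bp'_pair, hfm]
    simp
  have c2 : bp' (A ++ [m+1]) = bp' A + 1 := by
    rw [hA2, List.concat_eq_append, List.append_assoc, List.singleton_append,
      BPAux.bp'_split, ← List.concat_eq_append, ← hA2, BPAux.bp'_pair, hfbp]
    simp
  have c3 : bp' (A ++ [1]) ≤ bp' A + 1 := by
    rw [hA2, List.concat_eq_append, List.append_assoc, List.singleton_append,
      BPAux.bp'_split, ← List.concat_eq_append, ← hA2, BPAux.bp'_pair]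
    split <;> omega
  have c4 : bp' (List.range' 1 m ++ [m+1]) = 0 := by
    rw [hr2, BPAux.bp'_range']
  have s1 : bp' (A ++ (m+1) :: D) = bp' A + 1 + T := by
    rw [BPAux.bp'_split, c2, ← hT]
  have e1 : bp π = 3 + bp' A + T := by
    rw [BPAux.bp_eq, hdrop1]
    conv_lhs => rw [hA0, List.cons_append, BPAux.bp'_split]
    rw [c1, show a0 :: (A' ++ (m+1) :: D) = A ++ (m+1) :: D by rw [hA0]; rfl, s1]
    omega
  have s2 : bp' (List.range' 1 m ++ (m+1) :: D) = T := by
    rw [BPAux.bp'_split, c4, ← hT]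
    omega
  have e2 : bp (prefixTransposition π (m + 1) j) = 1 + bp' (A ++ [1]) + T := by
    rw [BPAux.bp_eq, hπ'eq]
    simp only [List.cons_append, List.nil_append, List.drop_succ_cons, List.drop_zero]
    conv_lhs => rw [hr3, List.cons_append, BPAux.bp'_split,
      show (1 : ℕ) :: (List.range' 2 (m-1) ++ (m+1) :: D) = List.range' 1 m ++ (m+1) :: D by
        rw [hr3]; rfl, s2]
    omega
  omega
end

section
/- Let π = [π_0, π_1, …, π_{n+1}] be a permutation that is not the identity permutation and satisfies π_1 = 1. Then there exist three operations o_1, o_2, o_3, each a prefix reversal or a prefix transposition, with o_1 a prefix reversal, such that b(((π·o_1)·o_2)·o_3) ≤ b(π) − 2, i.e., the three operations together remove at least two breakpoints. -/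
namespace StmtSix

/-- breakpoint indicator: `0` iff `|a-b| = 1`. -/
def g (a b : ℕ) : ℕ := if a + 1 = b ∨ b + 1 = a then 0 else 1

lemma g_le_one (a b : ℕ) : g a b ≤ 1 := by unfold g; split <;> omega

lemma g_comm (a b : ℕ) : g a b = g b a := by
  unfold g
  by_cases h : a + 1 = b ∨ b + 1 = a
  · rw [if_pos h, if_pos (Or.symm h)]
  · rw [if_neg h, if_neg (fun hh => h (Or.symm hh))]

lemma g_eq_zero {a b : ℕ} (h : a + 1 = b ∨ b + 1 = a) : g a b = 0 := by
  unfold g; simp [h]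

lemma g_eq_one {a b : ℕ} (h1 : a + 1 ≠ b) (h2 : b + 1 ≠ a) : g a b = 1 := by
  unfold g; simp [h1, h2]

lemma g_succ (a : ℕ) : g a (a+1) = 0 := g_eq_zero (Or.inl rfl)

lemma g_pred (a : ℕ) : g (a+1) a = 0 := g_eq_zero (Or.inr rfl)

/-- adjacency-breakpoint count of a list. -/
def cnt : List ℕ → ℕ
  | a :: b :: l => g a b + cnt (b :: l)
  | _ => 0

@[simp] lemma cnt_nil : cnt [] = 0 := rfl
@[simp] lemma cnt_single (a : ℕ) : cnt [a] = 0 := rfl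
lemma cnt_cons_cons (a b : ℕ) (l : List ℕ) : cnt (a :: b :: l) = g a b + cnt (b :: l) := rfl

lemma countP_zip_eq_cnt : ∀ l : List ℕ,
    (l.zip l.tail).countP (fun p => !(p.1 + 1 == p.2 || p.2 + 1 == p.1)) = cnt l
  | [] => rfl
  | [a] => rfl
  | a :: b :: l => by
      have ih := countP_zip_eq_cnt (b :: l)
      have hz : (a :: b :: l).zip (a :: b :: l).tail
          = (a, b) :: ((b :: l).zip (b :: l).tail) := by simp
      rw [hz, List.countP_cons, ih, cnt_cons_cons]
      by_cases h : a + 1 = b ∨ b + 1 = a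
      · rw [g_eq_zero h]; simp; omega
      · push_neg at h
        rw [g_eq_one h.1 h.2]; simp [h.1, h.2]; omega

lemma bp_cons (t : List ℕ) : bp (0 :: t) = 1 + cnt t := by
  have h1 : (0 :: t).drop 1 = t := rfl
  have h2 : (0 :: t).drop 2 = t.tail := by
    cases t <;> rfl
  rw [bp, h1, h2, countP_zip_eq_cnt]

/-- link value between the last element of `A` and `b`. -/
def lk (A : List ℕ) (b : ℕ) : ℕ :=
  match A.getLast? with
  | some a => g a b
  | none => 0

@[simp] lemma lk_nil (b : ℕ) : lk [] b = 0 := rfl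

lemma lk_eq {A : List ℕ} {a : ℕ} (h : A.getLast? = some a) (b : ℕ) : lk A b = g a b := by
  unfold lk; rw [h]

lemma cnt_append_cons : ∀ (A : List ℕ) (b : ℕ) (B : List ℕ),
    cnt (A ++ b :: B) = cnt A + lk A b + cnt (b :: B)
  | [], b, B => by simp
  | [a], b, B => by
      simp [cnt_cons_cons, lk, List.getLast?]
  | a :: a' :: A, b, B => by
      have ih := cnt_append_cons (a' :: A) b B
      have hlk : lk (a :: a' :: A) b = lk (a' :: A) b := by
        unfold lk; rw [List.getLast?_cons_cons]
      simp only [List.cons_append] at *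
      rw [cnt_cons_cons, ih, cnt_cons_cons, hlk]
      omega

lemma cnt_concat (l : List ℕ) (a : ℕ) : cnt (l ++ [a]) = cnt l + lk l a := by
  have := cnt_append_cons l a []
  simpa using this

lemma cnt_reverse : ∀ l : List ℕ, cnt l.reverse = cnt l
  | [] => rfl
  | [a] => rfl
  | a :: b :: l => by
      have ih := cnt_reverse (b :: l)
      rw [List.reverse_cons, cnt_concat, ih, cnt_cons_cons,
        lk_eq (by rw [List.getLast?_reverse]; rfl) a, g_comm]
      omega

lemma cnt_range' : ∀ (ℓ a : ℕ), cnt (List.range' a ℓ) = 0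
  | 0, a => rfl
  | 1, a => rfl
  | (ℓ+2), a => by
      have ih := cnt_range' (ℓ+1) (a+1)
      rw [List.range'_succ, List.range'_succ, cnt_cons_cons, ← List.range'_succ, ih, g_succ]

end StmtSix

namespace StmtSix

/-! ### smart constructors for operations -/

def revOp (A : List ℕ) : PrefOp := .rev (A.length + 1)
def transOp (A B : List ℕ) : PrefOp := .trans (A.length + 1) (A.length + B.length + 1)

@[simp] lemma revOp_isRev (A : List ℕ) : (revOp A).isRev = true := rfl
@[simp] lemma revOp_isTransrev (A : List ℕ) : (revOp A).isTransrev = false := rfl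
@[simp] lemma transOp_isTransrev (A B : List ℕ) : (transOp A B).isTransrev = false := rfl

lemma revOp_apply (A B : List ℕ) :
    (revOp A).apply (0 :: (A ++ B)) = 0 :: (A.reverse ++ B) := by
  show prefixReversal _ _ = _
  unfold prefixReversal
  have h1 : (0 :: (A ++ B)).take 1 = [0] := rfl
  have h2 : (0 :: (A ++ B)).drop 1 = A ++ B := rfl
  have h3 : (0 :: (A ++ B)).drop (A.length + 1) = B := by
    rw [List.drop_succ_cons, List.drop_left]
  rw [h1, h2, h3, Nat.add_sub_cancel, List.take_left]
  rfl

lemma transOp_apply (A B C : List ℕ) :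
    (transOp A B).apply (0 :: (A ++ (B ++ C))) = 0 :: (B ++ (A ++ C)) := by
  show prefixTransposition _ _ _ = _
  unfold prefixTransposition
  have h1 : (0 :: (A ++ (B ++ C))).take 1 = [0] := rfl
  have h2 : (0 :: (A ++ (B ++ C))).drop 1 = A ++ (B ++ C) := rfl
  have h3 : (0 :: (A ++ (B ++ C))).drop (A.length + 1) = B ++ C := by
    rw [List.drop_succ_cons, List.drop_left]
  have h4 : (0 :: (A ++ (B ++ C))).drop (A.length + B.length + 1) = C := by
    rw [List.drop_succ_cons, ← List.append_assoc, ← List.length_append, List.drop_left]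
  have h5 : A.length + B.length + 1 - (A.length + 1) = B.length := by omega
  rw [h1, h2, h3, h4, h5, Nat.add_sub_cancel, List.take_left, List.take_left]
  simp

lemma revOp_valid {n : ℕ} {A : List ℕ} (h2 : 2 ≤ A.length) (hn : A.length ≤ n) :
    (revOp A).Valid n := by
  show 3 ≤ A.length + 1 ∧ A.length + 1 ≤ n + 1
  omega

lemma transOp_valid {n : ℕ} {A B : List ℕ} (hA : A ≠ []) (hB : B ≠ [])
    (hn : A.length + B.length ≤ n) : (transOp A B).Valid n := by
  have hA' := List.length_pos_iff.mpr hA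
  have hB' := List.length_pos_iff.mpr hB
  refine ⟨by omega, by omega, by omega⟩

/-! ### permutation helpers -/

lemma perm_swap_append (A B C : List ℕ) : (B ++ (A ++ C)).Perm (A ++ (B ++ C)) := by
  have h : ((B ++ A) ++ C).Perm ((A ++ B) ++ C) :=
    (List.perm_append_comm).append_right C
  simpa [List.append_assoc] using h

lemma perm_rev_append (A B : List ℕ) : (A.reverse ++ B).Perm (A ++ B) :=
  (List.reverse_perm A).append_right B

lemma mem_bounds {n : ℕ} {t : List ℕ} (hp : t.Perm (List.range' 1 (n+1))) {a : ℕ}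
    (ha : a ∈ t) : 1 ≤ a ∧ a ≤ n + 1 := by
  have := hp.mem_iff.mp ha
  rw [List.mem_range'_1] at this
  omega

lemma mem_of_bounds {n : ℕ} {t : List ℕ} (hp : t.Perm (List.range' 1 (n+1))) {a : ℕ}
    (h1 : 1 ≤ a) (h2 : a ≤ n + 1) : a ∈ t := by
  refine hp.mem_iff.mpr ?_
  rw [List.mem_range'_1]
  omega

lemma len_perm {n : ℕ} {t : List ℕ} (hp : t.Perm (List.range' 1 (n+1))) :
    t.length = n + 1 := by
  rw [hp.length_eq, List.length_range']

lemma ne_of_append_nodup {X Y : List ℕ} (h : (X ++ Y).Nodup) {a b : ℕ}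
    (ha : a ∈ X) (hb : b ∈ Y) : a ≠ b :=
  fun e => (List.disjoint_of_nodup_append h) ha (e ▸ hb)

/-! ### range' helpers -/

lemma range'_concat' (a ℓ : ℕ) : List.range' a (ℓ+1) = List.range' a ℓ ++ [a + ℓ] := by
  have := List.range'_append (s := a) (m := ℓ) (n := 1) (step := 1)
  simp only [one_mul] at this
  rw [← this]
  rfl

lemma range'_getLast? (a ℓ : ℕ) : (List.range' a (ℓ+1)).getLast? = some (a + ℓ) := by
  rw [range'_concat', List.getLast?_concat]

lemma range'_head (a ℓ : ℕ) : List.range' a (ℓ+1) = a :: List.range' (a+1) ℓ := by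
  rw [List.range'_succ]

lemma reverse_range'_cons (a ℓ : ℕ) :
    (List.range' a (ℓ+1)).reverse = (a+ℓ) :: (List.range' a ℓ).reverse := by
  rw [range'_concat', List.reverse_append]
  rfl

lemma reverse_range'_getLast? (a ℓ : ℕ) :
    ((List.range' a (ℓ+1)).reverse).getLast? = some a := by
  rw [List.getLast?_reverse, range'_head]
  rfl

lemma cnt_reverse_range' (a ℓ : ℕ) : cnt (List.range' a ℓ).reverse = 0 := by
  rw [cnt_reverse, cnt_range']

end StmtSix

namespace StmtSix

lemma getLast?_append_right {X Y : List ℕ} (hY : Y ≠ []) :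
    (X ++ Y).getLast? = Y.getLast? := by
  rw [List.getLast?_append]
  cases hY' : Y.getLast? with
  | none => exact absurd (List.getLast?_eq_none_iff.mp hY') hY
  | some a => rfl

lemma run_split_asc : ∀ (l : List ℕ) (x : ℕ),
    ∃ ℓ D, x :: l = List.range' x (ℓ+1) ++ D ∧ ∀ d ∈ D.head?, d ≠ x + (ℓ+1)
  | [], x => ⟨0, [], by simp, by simp⟩
  | b :: r, x => by
      by_cases hb : b = x + 1
      · obtain ⟨ℓ, D, hdec, hbd⟩ := run_split_asc r b
        subst hb
        refine ⟨ℓ+1, D, ?_, ?_⟩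
        · rw [range'_head x (ℓ+1), List.cons_append, ← hdec]
        · intro d hd
          have := hbd d hd
          omega
      · exact ⟨0, b :: r, by simp [List.range'], by simpa using fun h => hb (by omega)⟩

lemma run_split_desc : ∀ (l : List ℕ) (x : ℕ),
    ∃ ℓ D, ℓ ≤ x ∧ x :: l = (List.range' (x-ℓ) (ℓ+1)).reverse ++ D ∧
      ∀ d ∈ D.head?, d + 1 ≠ x - ℓ
  | [], x => ⟨0, [], by omega, by simp, by simp⟩
  | b :: r, x => by
      by_cases hb : b + 1 = x
      · obtain ⟨ℓ, D, hle, hdec, hbd⟩ := run_split_desc r b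
        refine ⟨ℓ+1, D, by omega, ?_, ?_⟩
        · have hx : x - (ℓ+1) = b - ℓ := by omega
          have htop : b - ℓ + (ℓ+1) = x := by omega
          rw [hx, reverse_range'_cons (b-ℓ) (ℓ+1), htop, List.cons_append, ← hdec]
        · intro d hd
          have := hbd d hd
          omega
      · exact ⟨0, b :: r, by omega, by simp [List.range'], by simpa using fun h => hb (by omega)⟩

/-- Strip (maximal monotone run at the head) of a duplicate-free list. -/
lemma strip_split {x : ℕ} {u : List ℕ} (hnd : (x :: u).Nodup) :
    ∃ S D y, x :: u = S ++ D ∧ S ≠ [] ∧ S.getLast? = some y ∧ cnt S = 0 ∧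
      ((∃ ℓ, S = List.range' x (ℓ+1) ∧ y = x + ℓ)
        ∨ (∃ ℓ, 1 ≤ ℓ ∧ ℓ ≤ x ∧ S = (List.range' (x-ℓ) (ℓ+1)).reverse ∧ y = x - ℓ)) ∧
      (∀ d ∈ D.head?, g y d = 1) := by
  match u with
  | [] =>
      exact ⟨[x], [], x, by simp, by simp, by simp, by simp,
        Or.inl ⟨0, by simp [List.range'], by simp⟩, by simp⟩
  | b :: r =>
      by_cases hb : b = x + 1
      · obtain ⟨ℓ, D, hdec, hbd⟩ := run_split_asc (b :: r) x
        have hl : 1 ≤ ℓ := by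
          rcases Nat.eq_zero_or_pos ℓ with h0 | h; swap; · exact h
          subst h0
          simp [List.range'] at hdec
          have := hbd b (by rw [← hdec]; rfl)
          omega
        refine ⟨List.range' x (ℓ+1), D, x + ℓ, hdec, by simp [range'_head], range'_getLast? x ℓ,
          cnt_range' _ _, Or.inl ⟨ℓ, rfl, rfl⟩, ?_⟩
        intro d hd
        have hd1 : d ≠ x + (ℓ+1) := hbd d hd
        have hd2 : d ≠ x + ℓ - 1 := by
          have hmem : x + ℓ - 1 ∈ List.range' x (ℓ+1) := by
            rw [List.mem_range'_1]; omega
          have hdD : d ∈ D := List.mem_of_mem_head? hd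
          have := ne_of_append_nodup (hdec ▸ hnd) hmem hdD
          omega
        exact g_eq_one (by omega) (by omega)
      · by_cases hb' : b + 1 = x
        · obtain ⟨ℓ, D, hle, hdec, hbd⟩ := run_split_desc (b :: r) x
          have hl : 1 ≤ ℓ := by
            rcases Nat.eq_zero_or_pos ℓ with h0 | h; swap; · exact h
            subst h0
            simp [List.range'] at hdec
            have := hbd b (by rw [← hdec]; rfl)
            omega
          refine ⟨(List.range' (x-ℓ) (ℓ+1)).reverse, D, x - ℓ, hdec, by simp,
            reverse_range'_getLast? _ _, cnt_reverse_range' _ _,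
            Or.inr ⟨ℓ, hl, hle, rfl, rfl⟩, ?_⟩
          intro d hd
          have hd1 : d + 1 ≠ x - ℓ := hbd d hd
          have hd2 : d ≠ x - ℓ + 1 := by
            have hmem : x - ℓ + 1 ∈ (List.range' (x-ℓ) (ℓ+1)).reverse := by
              rw [List.mem_reverse, List.mem_range'_1]; omega
            have hdD : d ∈ D := List.mem_of_mem_head? hd
            have := ne_of_append_nodup (hdec ▸ hnd) hmem hdD
            omega
          exact g_eq_one (by omega) (by omega)
        · refine ⟨[x], b :: r, x, by simp, by simp, by simp, by simp,
            Or.inl ⟨0, by simp [List.range'], by simp⟩, ?_⟩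
          intro d hd
          have hdb : b = d := by simpa using hd
          subst hdb
          exact g_eq_one (fun h => hb (by omega)) (fun h => hb' (by omega))

end StmtSix

namespace StmtSix

def lk2 (A B : List ℕ) : ℕ :=
  match B.head? with
  | some b => lk A b
  | none => 0

lemma cnt_append (A B : List ℕ) : cnt (A ++ B) = cnt A + lk2 A B + cnt B := by
  cases B with
  | nil => simp [lk2]
  | cons b B' => exact cnt_append_cons A b B'

lemma lk2_eq {A B : List ℕ} {a b : ℕ} (hA : A.getLast? = some a) (hB : B.head? = some b) :
    lk2 A B = g a b := by
  unfold lk2; rw [hB]; exact lk_eq hA b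

lemma ne_nil_of_head? {X : List ℕ} {a : ℕ} (h : X.head? = some a) : X ≠ [] := by
  cases X <;> simp_all

lemma ne_nil_of_getLast? {X : List ℕ} {a : ℕ} (h : X.getLast? = some a) : X ≠ [] := by
  cases X <;> simp_all

lemma head?_append_left {X : List ℕ} (Y : List ℕ) (h : X ≠ []) :
    (X ++ Y).head? = X.head? := by
  cases X <;> simp_all

lemma mem_of_getLast' {l : List ℕ} {a : ℕ} (h : l.getLast? = some a) : a ∈ l := by
  have hne : l ≠ [] := ne_nil_of_getLast? h
  rw [List.getLast?_eq_getLast hne] at h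
  have := List.getLast_mem hne
  simpa [← Option.some_inj.mp h] using this

lemma mem_of_head' {l : List ℕ} {a : ℕ} (h : l.head? = some a) : a ∈ l := by
  cases l with
  | nil => simp at h
  | cons b r => simp at h; simp [h]

lemma head_ne_getLast {l : List ℕ} (hnd : l.Nodup) (h2 : 2 ≤ l.length) {a b : ℕ}
    (hh : l.head? = some a) (hl : l.getLast? = some b) : a ≠ b := by
  match l, h2 with
  | a₁ :: a₂ :: r, _ =>
    have ha : a₁ = a := by simpa using hh
    have hb : b ∈ a₂ :: r := by
      have h' : (a₂ :: r).getLast? = some b := by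
        rw [List.getLast?_cons_cons] at hl; exact hl
      exact mem_of_getLast' h'
    subst ha
    have := (List.nodup_cons.mp hnd).1
    exact fun e => this (e ▸ hb)

/-- bp accounting for a prefix reversal `0 :: (P ++ C) ↦ 0 :: (P.reverse ++ C)`. -/
lemma rev_bp {P C : List ℕ} {p z c : ℕ} (hp : P.head? = some p) (hz : P.getLast? = some z)
    (hc : C.head? = some c) :
    bp (0 :: (P.reverse ++ C)) + g z c = bp (0 :: (P ++ C)) + g p c := by
  rw [bp_cons, bp_cons, cnt_append, cnt_append, cnt_reverse,
    lk2_eq hz hc, lk2_eq (by rw [List.getLast?_reverse]; exact hp) hc]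
  omega

/-- bp accounting for a prefix transposition `0 :: (S ++ (B ++ C)) ↦ 0 :: (B ++ (S ++ C))`. -/
lemma trans_bp {S B C : List ℕ} {x y d w c : ℕ}
    (hx : S.head? = some x) (hy : S.getLast? = some y)
    (hd : B.head? = some d) (hw : B.getLast? = some w)
    (hc : C.head? = some c) :
    bp (0 :: (B ++ (S ++ C))) + g y d + g w c = bp (0 :: (S ++ (B ++ C))) + g w x + g y c := by
  rw [bp_cons, bp_cons, cnt_append B (S ++ C), cnt_append S C, cnt_append S (B ++ C),
    cnt_append B C, lk2_eq hw (by rw [head?_append_left C (ne_nil_of_head? hx)]; exact hx),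
    lk2_eq hy hc, lk2_eq hy (by rw [head?_append_left C (ne_nil_of_head? hd)]; exact hd),
    lk2_eq hw hc]
  omega

lemma length_append₂ {X Y : List ℕ} : (X ++ Y).length = X.length + Y.length :=
  List.length_append

end StmtSix

namespace StmtSix

lemma rev_leaf {n : ℕ} (P C : List ℕ) {p z c : ℕ} (hlen : (P ++ C).length = n + 1)
    (h2 : 2 ≤ P.length) (hp : P.head? = some p) (hz : P.getLast? = some z)
    (hc : C.head? = some c) :
    (revOp P).Valid n ∧ (revOp P).apply (0 :: (P ++ C)) = 0 :: (P.reverse ++ C) ∧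
    bp (0 :: (P.reverse ++ C)) + g z c = bp (0 :: (P ++ C)) + g p c := by
  have hClen : 1 ≤ C.length := List.length_pos_iff.mpr (ne_nil_of_head? hc)
  have hPn : P.length ≤ n := by
    have := length_append₂ (X := P) (Y := C); omega
  exact ⟨revOp_valid h2 hPn, revOp_apply P C, rev_bp hp hz hc⟩

lemma trans_leaf {n : ℕ} (S B C : List ℕ) {x y d w c : ℕ}
    (hlen : (S ++ (B ++ C)).length = n + 1)
    (hx : S.head? = some x) (hy : S.getLast? = some y) (hd : B.head? = some d)
    (hw : B.getLast? = some w) (hc : C.head? = some c) :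
    (transOp S B).Valid n ∧ (transOp S B).apply (0 :: (S ++ (B ++ C))) = 0 :: (B ++ (S ++ C)) ∧
    bp (0 :: (B ++ (S ++ C))) + g y d + g w c
      = bp (0 :: (S ++ (B ++ C))) + g w x + g y c := by
  have hClen : 1 ≤ C.length := List.length_pos_iff.mpr (ne_nil_of_head? hc)
  have hl : (S ++ (B ++ C)).length = S.length + B.length + C.length := by
    rw [length_append₂, length_append₂]; omega
  refine ⟨transOp_valid (ne_nil_of_head? hx) (ne_nil_of_head? hd) (by omega), ?_, ?_⟩
  · exact transOp_apply S B C
  · exact trans_bp hx hy hd hw hc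

end StmtSix

namespace StmtSix

/-- Core step: a strip `S` (head `x`, last `y`) followed by junk in which the
value `w` adjacent to `x` sits; one valid operation removes a breakpoint. -/
lemma chase (n : ℕ) (S E F : List ℕ) (x y w : ℕ)
    (hperm : (S ++ (E ++ w :: F)).Perm (List.range' 1 (n+1)))
    (hnd : (S ++ (E ++ w :: F)).Nodup)
    (hlast : (S ++ (E ++ w :: F)).getLast? = some (n+1))
    (hSh : S.head? = some x) (hSl : S.getLast? = some y)
    (hgyd : ∀ d ∈ (E ++ w :: F).head?, g y d = 1)
    (hxw : w + 1 = x ∨ x + 1 = w)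
    (hslen : 2 ≤ S.length + E.length) :
    ∃ o : PrefOp, o.Valid n ∧ o.isTransrev = false ∧
      bp (o.apply (0 :: (S ++ (E ++ w :: F)))) + 1 ≤ bp (0 :: (S ++ (E ++ w :: F))) := by
  have hSne := ne_nil_of_head? hSh
  have hlen := len_perm hperm
  have hxt : x ∈ S ++ (E ++ w :: F) := List.mem_append_left _ (mem_of_head' hSh)
  have hxb := mem_bounds hperm hxt
  obtain ⟨d, hd⟩ : ∃ d, (E ++ w :: F).head? = some d := by
    cases E <;> exact ⟨_, rfl⟩
  have hgyd' : g y d = 1 := hgyd d hd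
  have hgwx : g w x = 0 := g_eq_zero hxw
  -- data for the left block S ++ E
  have hSEne : S ++ E ≠ [] := fun h => hSne (List.append_eq_nil_iff.mp h).1
  obtain ⟨z, hz⟩ : ∃ z, (S ++ E).getLast? = some z :=
    ⟨(S ++ E).getLast hSEne, List.getLast?_eq_getLast hSEne⟩
  have hPh : (S ++ E).head? = some x := by
    rw [head?_append_left _ hSne]; exact hSh
  have hnd2 : ((S ++ E) ++ (w :: F)).Nodup := by
    rw [List.append_assoc]; exact hnd
  have hSElen : 2 ≤ (S ++ E).length := by rw [length_append₂]; exact hslen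
  have hxz : x ≠ z := head_ne_getLast (hnd2.of_append_left) hSElen hPh hz
  have hzt : z ∈ S ++ (E ++ w :: F) := by
    rw [← List.append_assoc]
    exact List.mem_append_left _ (mem_of_getLast' hz)
  have hzb := mem_bounds hperm hzt
  have hlen2 : ((S ++ E) ++ (w :: F)).length = n + 1 := by
    rw [List.append_assoc]; exact hlen
  have hBl : (E ++ [w]).getLast? = some w := List.getLast?_concat
  have hBh : (E ++ [w]).head? = some d := by
    have h' : (E ++ [w]).head? = (E ++ w :: F).head? := by cases E <;> rfl
    rw [h', hd]
  cases F with
  | nil =>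
      have hwlast : w = n + 1 := by
        have h1 : (S ++ (E ++ [w])).getLast? = some w := by
          rw [getLast?_append_right (by simp), List.getLast?_concat]
        rw [hlast] at h1
        exact (Option.some_inj.mp h1).symm
      rcases hxw with hxw1 | hxw1
      · exfalso; omega
      · -- reversal of S ++ E
        have hgzw : g z w = 1 := g_eq_one (by omega) (by omega)
        obtain ⟨hval, happ, hbp⟩ := rev_leaf (n := n) (S ++ E) [w] hlen2 hSElen hPh hz rfl
        refine ⟨revOp (S ++ E), hval, by simp, ?_⟩
        have ht : S ++ (E ++ [w]) = (S ++ E) ++ [w] := (List.append_assoc _ _ _).symm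
        rw [ht, happ]
        have hgxw : g x w = 0 := by rw [g_comm]; exact hgwx
        rw [hgzw, hgxw] at hbp
        omega
  | cons f F' =>
      have hft : f ∈ S ++ (E ++ w :: f :: F') := by simp
      have hfb := mem_bounds hperm hft
      have hxf : x ≠ f :=
        ne_of_append_nodup hnd (mem_of_head' hSh) (by simp)
      have hzf : z ≠ f :=
        ne_of_append_nodup hnd2 (mem_of_getLast' hz) (by simp)
      by_cases hwf : w + 1 = f ∨ f + 1 = w
      · -- reversal of S ++ E
        have hgzw : g z w = 1 := by
          rcases hxw with h1 | h1 <;> rcases hwf with h2 | h2 <;>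
            exact g_eq_one (by omega) (by omega)
        obtain ⟨hval, happ, hbp⟩ :=
          rev_leaf (n := n) (S ++ E) (w :: f :: F') hlen2 hSElen hPh hz rfl
        refine ⟨revOp (S ++ E), hval, by simp, ?_⟩
        have ht : S ++ (E ++ w :: f :: F') = (S ++ E) ++ (w :: f :: F') :=
          (List.append_assoc _ _ _).symm
        rw [ht, happ]
        have hgxw : g x w = 0 := by rw [g_comm]; exact hgwx
        rw [hgzw, hgxw] at hbp
        omega
      · -- transposition moving S past w
        have hgwf : g w f = 1 :=
          g_eq_one (fun h => hwf (Or.inl h)) (fun h => hwf (Or.inr h))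
        have ht : E ++ w :: f :: F' = (E ++ [w]) ++ (f :: F') := by simp
        have hlen3 : (S ++ ((E ++ [w]) ++ (f :: F'))).length = n + 1 := by
          rw [← ht]; exact hlen
        obtain ⟨hval, happ, hbp⟩ :=
          trans_leaf (n := n) S (E ++ [w]) (f :: F') hlen3 hSh hSl hBh hBl rfl
        refine ⟨transOp S (E ++ [w]), hval, by simp, ?_⟩
        rw [ht, happ]
        have hyf := g_le_one y f
        rw [hgyd', hgwf, hgwx] at hbp
        omega

/-- Lemma A: any permutation tail not starting with `1` admits one valid
operation removing a breakpoint. -/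
lemma lemmaA (n : ℕ) (t : List ℕ) (hperm : t.Perm (List.range' 1 (n+1)))
    (hlast : t.getLast? = some (n+1)) (hx1 : t.head? ≠ some 1) :
    ∃ o : PrefOp, o.Valid n ∧ o.isTransrev = false ∧
      bp (o.apply (0 :: t)) + 1 ≤ bp (0 :: t) := by
  obtain ⟨x, u, rfl⟩ : ∃ x u, t = x :: u := by
    cases t with
    | nil => simp at hlast
    | cons a u => exact ⟨a, u, rfl⟩
  have hx : x ≠ 1 := fun h => hx1 (by simp [h])
  have hnd : (x :: u).Nodup := hperm.symm.nodup (List.nodup_range' (s := 1) (n := n+1))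
  have hxb := mem_bounds hperm (by simp : x ∈ x :: u)
  have hlen := len_perm hperm
  obtain ⟨S, D, y, hdec, hSne, hylast, hcntS, hform, hbd⟩ := strip_split hnd
  have hShead : S.head? = some x := by
    have h := congrArg List.head? hdec
    rw [head?_append_left D hSne] at h
    exact h.symm
  cases D with
  | nil =>
      exfalso
      rw [List.append_nil] at hdec
      rcases hform with ⟨ℓ, hS, hy⟩ | ⟨ℓ, hl1, hlℓ, hS, hy⟩
      · have h1m : (1:ℕ) ∈ x :: u := mem_of_bounds hperm le_rfl (by omega)
        rw [hdec, hS, List.mem_range'_1] at h1m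
        omega
      · have h' : (x :: u).getLast? = some y := by rw [hdec]; exact hylast
        rw [hlast] at h'
        have := Option.some_inj.mp h'
        omega
  | cons d D' =>
      have hgyd1 : g y d = 1 := hbd d rfl
      rcases hform with ⟨ℓ, hS, hy⟩ | ⟨ℓ, hl1, hlℓ, hS, hy⟩
      · -- ascending strip; chase w = x - 1
        have hx2 : 2 ≤ x := by omega
        set w := x - 1 with hw
        have hwmem : w ∈ x :: u := mem_of_bounds hperm (by omega) (by omega)
        have hwS : w ∉ S := by rw [hS, List.mem_range'_1]; omega
        have hwD : w ∈ d :: D' := by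
          rcases List.mem_append.mp (hdec ▸ hwmem) with h | h
          · exact absurd h hwS
          · exact h
        obtain ⟨E, F, hEF⟩ := List.append_of_mem hwD
        have hdec2 : x :: u = S ++ (E ++ w :: F) := by rw [hdec, hEF]
        have hslen : 2 ≤ S.length + E.length := by
          rcases Nat.eq_zero_or_pos ℓ with h0 | h0
          · cases E with
            | nil =>
                exfalso
                have : d = w := by
                  have := congrArg List.head? hEF
                  simpa using this
                rw [this] at hgyd1
                have : g y w = 0 := g_eq_zero (Or.inr (by omega))
                omega
            | cons e E' =>
                have hSlen : S.length = ℓ + 1 := by rw [hS, List.length_range']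
                rw [hSlen, List.length_cons]
                omega
          · have : S.length = ℓ + 1 := by rw [hS, List.length_range']
            omega
        have hgyd : ∀ d' ∈ (E ++ w :: F).head?, g y d' = 1 := by
          rw [← hEF]; exact hbd
        rw [hdec2] at hperm hnd hlast ⊢
        exact chase n S E F x y w hperm hnd hlast hShead hylast hgyd (Or.inl (by omega)) hslen
      · -- descending strip; chase w = x + 1
        have hxn : x ≠ n + 1 := by
          have h2 : 2 ≤ (x :: u).length := by
            rw [hdec, length_append₂, List.length_cons]
            have := List.length_pos_iff.mpr hSne
            omega
          exact head_ne_getLast hnd h2 rfl hlast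
        set w := x + 1 with hw
        have hwmem : w ∈ x :: u := mem_of_bounds hperm (by omega) (by omega)
        have hwS : w ∉ S := by
          rw [hS, List.mem_reverse, List.mem_range'_1]; omega
        have hwD : w ∈ d :: D' := by
          rcases List.mem_append.mp (hdec ▸ hwmem) with h | h
          · exact absurd h hwS
          · exact h
        obtain ⟨E, F, hEF⟩ := List.append_of_mem hwD
        have hdec2 : x :: u = S ++ (E ++ w :: F) := by rw [hdec, hEF]
        have hslen : 2 ≤ S.length + E.length := by
          have : S.length = ℓ + 1 := by
            rw [hS, List.length_reverse, List.length_range']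
          omega
        have hgyd : ∀ d' ∈ (E ++ w :: F).head?, g y d' = 1 := by
          rw [← hEF]; exact hbd
        rw [hdec2] at hperm hnd hlast ⊢
        exact chase n S E F x y w hperm hnd hlast hShead hylast hgyd (Or.inr rfl) hslen

end StmtSix

namespace StmtSix

/-- Two-op step: like `chase`, but with head-tracking hypotheses, produces two
valid operations together removing at least two breakpoints. -/
lemma chase2 (n : ℕ) (S E F : List ℕ) (x y w : ℕ)
    (hperm : (S ++ (E ++ w :: F)).Perm (List.range' 1 (n+1)))
    (hnd : (S ++ (E ++ w :: F)).Nodup)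
    (hlast : (S ++ (E ++ w :: F)).getLast? = some (n+1))
    (hSh : S.head? = some x) (hSl : S.getLast? = some y)
    (hgyd : ∀ d ∈ (E ++ w :: F).head?, g y d = 1)
    (hxw : w + 1 = x ∨ x + 1 = w)
    (hslen : 2 ≤ S.length + E.length)
    (hdne1 : ∀ d ∈ (E ++ w :: F).head?, d ≠ 1)
    (hzne1 : ∀ z ∈ (S ++ E).getLast?, z ≠ 1) :
    ∃ o₂ o₃ : PrefOp, o₂.Valid n ∧ o₃.Valid n ∧
      o₂.isTransrev = false ∧ o₃.isTransrev = false ∧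
      bp (o₃.apply (o₂.apply (0 :: (S ++ (E ++ w :: F))))) + 2
        ≤ bp (0 :: (S ++ (E ++ w :: F))) := by
  have hSne := ne_nil_of_head? hSh
  have hlen := len_perm hperm
  have hxt : x ∈ S ++ (E ++ w :: F) := List.mem_append_left _ (mem_of_head' hSh)
  have hxb := mem_bounds hperm hxt
  obtain ⟨d, hd⟩ : ∃ d, (E ++ w :: F).head? = some d := by
    cases E <;> exact ⟨_, rfl⟩
  have hgyd' : g y d = 1 := hgyd d hd
  have hd1 : d ≠ 1 := hdne1 d hd
  have hgwx : g w x = 0 := g_eq_zero hxw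
  have hgxw : g x w = 0 := by rw [g_comm]; exact hgwx
  have hSEne : S ++ E ≠ [] := fun h => hSne (List.append_eq_nil_iff.mp h).1
  obtain ⟨z, hz⟩ : ∃ z, (S ++ E).getLast? = some z :=
    ⟨(S ++ E).getLast hSEne, List.getLast?_eq_getLast hSEne⟩
  have hz1 : z ≠ 1 := hzne1 z hz
  have hPh : (S ++ E).head? = some x := by
    rw [head?_append_left _ hSne]; exact hSh
  have hnd2 : ((S ++ E) ++ (w :: F)).Nodup := by
    rw [List.append_assoc]; exact hnd
  have hSElen : 2 ≤ (S ++ E).length := by rw [length_append₂]; exact hslen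
  have hxz : x ≠ z := head_ne_getLast (hnd2.of_append_left) hSElen hPh hz
  have hzt : z ∈ S ++ (E ++ w :: F) := by
    rw [← List.append_assoc]
    exact List.mem_append_left _ (mem_of_getLast' hz)
  have hzb := mem_bounds hperm hzt
  have hlen2 : ((S ++ E) ++ (w :: F)).length = n + 1 := by
    rw [List.append_assoc]; exact hlen
  have hBl : (E ++ [w]).getLast? = some w := List.getLast?_concat
  have hBh : (E ++ [w]).head? = some d := by
    have h' : (E ++ [w]).head? = (E ++ w :: F).head? := by cases E <;> rfl
    rw [h', hd]
  cases F with
  | nil =>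
      have hwlast : w = n + 1 := by
        have h1 : (S ++ (E ++ [w])).getLast? = some w := by
          rw [getLast?_append_right (by simp), List.getLast?_concat]
        rw [hlast] at h1
        exact (Option.some_inj.mp h1).symm
      rcases hxw with hxw1 | hxw1
      · exfalso; omega
      · have hgzw : g z w = 1 := g_eq_one (by omega) (by omega)
        obtain ⟨hval, happ, hbp⟩ := rev_leaf (n := n) (S ++ E) [w] hlen2 hSElen hPh hz rfl
        -- result tail
        set t₂ := (S ++ E).reverse ++ [w] with ht₂
        have hperm2 : t₂.Perm (List.range' 1 (n+1)) := by
          refine (perm_rev_append _ _).trans ?_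
          rw [List.append_assoc]; exact hperm
        have hlast2 : t₂.getLast? = some (n+1) := by
          rw [ht₂, getLast?_append_right (by simp)]
          simp [hwlast]
        have hhead2 : t₂.head? ≠ some 1 := by
          rw [ht₂, head?_append_left _ (by rw [ne_eq, List.reverse_eq_nil_iff]; exact hSEne), List.head?_reverse, hz]
          simpa using hz1
        obtain ⟨o₃, hv₃, htr₃, hb₃⟩ := lemmaA n t₂ hperm2 hlast2 hhead2
        refine ⟨revOp (S ++ E), o₃, hval, hv₃, by simp, htr₃, ?_⟩
        have ht : S ++ (E ++ [w]) = (S ++ E) ++ [w] := (List.append_assoc _ _ _).symm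
        rw [ht, happ]
        rw [hgzw, hgxw] at hbp
        omega
  | cons f F' =>
      have hxf : x ≠ f :=
        ne_of_append_nodup hnd (mem_of_head' hSh) (by simp)
      have hzf : z ≠ f :=
        ne_of_append_nodup hnd2 (mem_of_getLast' hz) (by simp)
      have hlastC : (f :: F').getLast? = some (n+1) := by
        have h1 : (S ++ (E ++ w :: f :: F')).getLast? = (f :: F').getLast? := by
          rw [getLast?_append_right (by simp), getLast?_append_right (by simp),
            List.getLast?_cons_cons]
        rw [← h1, hlast]
      by_cases hwf : w + 1 = f ∨ f + 1 = w
      · have hgzw : g z w = 1 := by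
          rcases hxw with h1 | h1 <;> rcases hwf with h2 | h2 <;>
            exact g_eq_one (by omega) (by omega)
        obtain ⟨hval, happ, hbp⟩ :=
          rev_leaf (n := n) (S ++ E) (w :: f :: F') hlen2 hSElen hPh hz rfl
        set t₂ := (S ++ E).reverse ++ (w :: f :: F') with ht₂
        have hperm2 : t₂.Perm (List.range' 1 (n+1)) := by
          refine (perm_rev_append _ _).trans ?_
          rw [List.append_assoc]; exact hperm
        have hlast2 : t₂.getLast? = some (n+1) := by
          rw [ht₂, getLast?_append_right (by simp), List.getLast?_cons_cons, hlastC]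
        have hhead2 : t₂.head? ≠ some 1 := by
          rw [ht₂, head?_append_left _ (by rw [ne_eq, List.reverse_eq_nil_iff]; exact hSEne), List.head?_reverse, hz]
          simpa using hz1
        obtain ⟨o₃, hv₃, htr₃, hb₃⟩ := lemmaA n t₂ hperm2 hlast2 hhead2
        refine ⟨revOp (S ++ E), o₃, hval, hv₃, by simp, htr₃, ?_⟩
        have ht : S ++ (E ++ w :: f :: F') = (S ++ E) ++ (w :: f :: F') :=
          (List.append_assoc _ _ _).symm
        rw [ht, happ]
        rw [hgzw, hgxw] at hbp
        omega
      · have hgwf : g w f = 1 :=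
          g_eq_one (fun h => hwf (Or.inl h)) (fun h => hwf (Or.inr h))
        have ht : E ++ w :: f :: F' = (E ++ [w]) ++ (f :: F') := by simp
        have hlen3 : (S ++ ((E ++ [w]) ++ (f :: F'))).length = n + 1 := by
          rw [← ht]; exact hlen
        obtain ⟨hval, happ, hbp⟩ :=
          trans_leaf (n := n) S (E ++ [w]) (f :: F') hlen3 hSh hSl hBh hBl rfl
        set t₂ := (E ++ [w]) ++ (S ++ (f :: F')) with ht₂
        have hperm2 : t₂.Perm (List.range' 1 (n+1)) := by
          refine (perm_swap_append S (E ++ [w]) (f :: F')).trans ?_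
          rw [← ht]; exact hperm
        have hlast2 : t₂.getLast? = some (n+1) := by
          rw [ht₂, getLast?_append_right (by simp),
            getLast?_append_right (by simp), hlastC]
        have hhead2 : t₂.head? ≠ some 1 := by
          rw [ht₂, head?_append_left _ (by simp), hBh]
          simpa using hd1
        obtain ⟨o₃, hv₃, htr₃, hb₃⟩ := lemmaA n t₂ hperm2 hlast2 hhead2
        refine ⟨transOp S (E ++ [w]), o₃, hval, hv₃, by simp, htr₃, ?_⟩
        rw [ht, happ]
        have hyf := g_le_one y f
        rw [hgyd', hgwf, hgwx] at hbp
        omega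

end StmtSix

namespace StmtSix

theorem main_thm
    (n : ℕ) (π : List ℕ) (hπ : IsPerm n π)
    (hid : π ≠ List.range (n + 2)) (h1 : π.getD 1 0 = 1) :
    ∃ o₁ o₂ o₃ : PrefOp,
      o₁.Valid n ∧ o₂.Valid n ∧ o₃.Valid n ∧
      o₁.isRev = true ∧ o₂.isTransrev = false ∧ o₃.isTransrev = false ∧
      bp (o₃.apply (o₂.apply (o₁.apply π))) ≤ bp π - 2 := by
  obtain ⟨hperm0, h0, hl0⟩ := hπ
  have hlenπ : π.length = n + 2 := by rw [hperm0.length_eq, List.length_range]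
  obtain ⟨p0, t, rfl⟩ : ∃ p0 t, π = p0 :: t := by
    cases π with
    | nil => simp at hlenπ
    | cons a u => exact ⟨a, u, rfl⟩
  have hp0 : p0 = 0 := by simpa using h0
  subst hp0
  have hrange : List.range (n+2) = 0 :: List.range' 1 (n+1) := by
    rw [List.range_eq_range', List.range'_succ]
  have hperm : t.Perm (List.range' 1 (n+1)) := by
    have h' := hperm0
    rw [hrange] at h'
    exact h'.cons_inv
  have hlen : t.length = n+1 := len_perm hperm
  have htne : t ≠ [] := by intro h; rw [h] at hlen; simp at hlen
  have hnd : t.Nodup := hperm.symm.nodup (List.nodup_range' (s := 1) (n := n+1))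
  have hlast : t.getLast? = some (n+1) := by
    have h1' : (0 :: t).getD (n+1) 0 = t.getD n 0 := List.getD_cons_succ
    rw [h1'] at hl0
    rw [List.getD_eq_getElem t 0 (by omega)] at hl0
    rw [List.getLast?_eq_getLast htne, List.getLast_eq_getElem]
    congr 1
    rw [← hl0]
    congr 1
    omega
  obtain ⟨u, rfl⟩ : ∃ u, t = 1 :: u := by
    cases t with
    | nil => exact absurd rfl htne
    | cons a u =>
        have : a = 1 := by simpa using h1
        exact ⟨u, by rw [this]⟩
  have hid' : (1 :: u) ≠ List.range' 1 (n+1) := by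
    intro h
    exact hid (by rw [hrange, h])
  clear hid hperm0 h0 hl0 h1 hlenπ
  -- extract the sorted prefix [1..q]
  obtain ⟨ℓ, D, hdq, hbq⟩ := run_split_asc u 1
  cases D with
  | nil =>
      exfalso
      rw [List.append_nil] at hdq
      have : ℓ + 1 = n + 1 := by
        have := congrArg List.length hdq
        rw [List.length_range'] at this
        omega
      rw [this] at hdq
      exact hid' hdq
  | cons v R =>
  have hvu : v ∈ 1 :: u := by rw [hdq]; simp
  have hvb := mem_bounds hperm hvu
  have hvblock : v ∉ List.range' 1 (ℓ+1) :=
    fun h => (ne_of_append_nodup (hdq ▸ hnd) h (by simp : v ∈ v :: R)) rfl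
  have hvq : ℓ + 3 ≤ v := by
    have h1 : ¬ (1 ≤ v ∧ v < 1 + (ℓ+1)) := fun h => hvblock (List.mem_range'_1.mpr h)
    have h2 : v ≠ 1 + (ℓ+1) := by
      have := hbq v (by simp)
      omega
    omega
  have hlen2 : ℓ + 1 + (v :: R).length = n + 1 := by
    have := congrArg List.length hdq
    rw [length_append₂, List.length_range'] at this
    omega
  -- the block and its reverse
  set q := ℓ + 1 with hq
  have hblockh : (List.range' 1 q).head? = some 1 := by rw [hq, range'_head]; rfl
  have hblockl : (List.range' 1 q).getLast? = some q := by
    rw [hq, range'_getLast?, Nat.add_comm]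
  rcases Nat.lt_or_ge ℓ 1 with hℓ1 | hℓ1
  · -- q = 1 : prefix is just [1]
    have hq1 : q = 1 := by omega
    have hu : u = v :: R := by
      have h' := hdq
      rw [hq1] at h'
      simpa [List.range'] using h'
    have hlen2' : 1 + ((v :: R).length) = n + 1 := by rw [hq1] at hlen2; exact hlen2
    have hn1 : 1 ≤ n := by
      have : (v :: R).length = R.length + 1 := by simp
      omega
    -- locate 2
    have h2m : (2:ℕ) ∈ 1 :: u := mem_of_bounds hperm (by omega) (by omega)
    have h2D : (2:ℕ) ∈ v :: R := by
      rcases List.mem_cons.mp h2m with h | h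
      · omega
      · rwa [hu] at h
    obtain ⟨J, U, hJU⟩ := List.append_of_mem h2D
    have hJne : J ≠ [] := by
      intro h
      rw [h] at hJU
      simp at hJU
      omega
    -- the run starting at 2
    obtain ⟨ℓ₂, W, hd2, hb2⟩ := run_split_asc U 2
    have htt : (1:ℕ) :: u = 1 :: (J ++ (List.range' 2 (ℓ₂+1) ++ W)) := by
      rw [hu, hJU, hd2]
    have hndt : ((1:ℕ) :: (J ++ (List.range' 2 (ℓ₂+1) ++ W))).Nodup := htt ▸ hnd
    have hlent : ((1:ℕ) :: (J ++ (List.range' 2 (ℓ₂+1) ++ W))).length = n + 1 := by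
      rw [← htt]; exact hlen
    have hlastt : ((1:ℕ) :: (J ++ (List.range' 2 (ℓ₂+1) ++ W))).getLast? = some (n+1) := by
      rw [← htt]; exact hlast
    have hblk2ne : List.range' 2 (ℓ₂+1) ≠ [] := by
      rw [range'_head]; simp
    have hWne : W ≠ [] := by
      intro h
      rw [h, List.append_nil] at hlent hlastt
      have hne : J ++ List.range' 2 (ℓ₂+1) ≠ [] :=
        fun hh => hJne (List.append_eq_nil_iff.mp hh).1
      have h1 : (J ++ List.range' 2 (ℓ₂+1)).getLast? = some (n+1) := by
        rw [← getLast?_append_right (X := [(1:ℕ)]) hne]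
        exact hlastt
      rw [getLast?_append_right hblk2ne, range'_getLast?] at h1
      have h2 : 2 + ℓ₂ = n + 1 := by simpa using h1
      rw [List.length_cons, length_append₂, List.length_range'] at hlent
      have := List.length_pos_iff.mpr hJne
      omega
    obtain ⟨W₁, hW1⟩ : ∃ a, W.head? = some a := by
      cases W with
      | nil => exact absurd rfl hWne
      | cons a l => exact ⟨a, rfl⟩
    have hW1W : W₁ ∈ W := mem_of_head' hW1
    -- inequality facts about W₁
    have hW1b : W₁ ≠ 2 + ℓ₂ + 1 := by
      have := hb2 W₁ (by rw [hW1]; rfl)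
      omega
    have hW1blk : ∀ b ∈ List.range' 2 (ℓ₂+1), W₁ ≠ b := by
      intro b hb
      exact (ne_of_append_nodup ((List.nodup_cons.mp hndt).2.of_append_right) hb hW1W).symm
    have hW1ne1 : W₁ ≠ 1 := by
      intro h
      exact (List.nodup_cons.mp hndt).1 (h ▸ (by simp [hW1W] : W₁ ∈ J ++ (List.range' 2 (ℓ₂+1) ++ W)))
    have hW1ne2 : W₁ ≠ 2 := hW1blk 2 (by rw [List.mem_range'_1]; omega)
    have hW1bd : 1 ≤ W₁ ∧ W₁ ≤ n + 1 := mem_bounds hperm (by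
      rw [htt]
      exact List.mem_cons_of_mem _ (List.mem_append_right _ (List.mem_append_right _ hW1W)))
    have hgsW : g (2+ℓ₂) W₁ = 1 := by
      refine g_eq_one (by omega) ?_
      rcases Nat.eq_zero_or_pos ℓ₂ with h0 | h0
      · subst h0; simpa using fun h => hW1ne1 (by omega)
      · intro h
        exact hW1blk (1+ℓ₂) (by rw [List.mem_range'_1]; omega) (by omega)
    have hg1W : g 1 W₁ = 1 := g_eq_one (by omega) (by omega)
    -- last element of the junk J
    obtain ⟨xJ, hxJ⟩ : ∃ a, J.getLast? = some a := by
      cases hJ : J with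
      | nil => exact absurd hJ hJne
      | cons a l => exact ⟨(a :: l).getLast (by simp), List.getLast?_eq_getLast _⟩
    have hxJJ : xJ ∈ J := mem_of_getLast' hxJ
    have hxJ1 : xJ ≠ 1 := by
      intro h
      exact (List.nodup_cons.mp hndt).1 (h ▸ (by simp [hxJJ] : xJ ∈ J ++ (List.range' 2 (ℓ₂+1) ++ W)))
    have hJrh : J.reverse.head? = some xJ := by rw [List.head?_reverse]; exact hxJ
    by_cases hx3 : xJ = 3
    · -- B2 : xJ = 3
      -- B2 : xJ = 3 forces the block to be just [2]
      have hl20 : ℓ₂ = 0 := by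
        by_contra h0
        have h3blk : (3:ℕ) ∈ List.range' 2 (ℓ₂+1) := by
          rw [List.mem_range'_1]; omega
        exact (ne_of_append_nodup ((List.nodup_cons.mp hndt).2)
          hxJJ (List.mem_append_left _ h3blk)) hx3
      subst hl20
      subst hx3
      -- strip of J.reverse
      have hndJ : J.Nodup := ((List.nodup_cons.mp hndt).2).of_append_left
      have hndJr : J.reverse.Nodup := List.nodup_reverse.mpr hndJ
      obtain ⟨Jtl, hJtl⟩ : ∃ l, J.reverse = 3 :: l := by
        cases hJr : J.reverse with
        | nil =>
            exfalso
            exact hJne (by simpa using congrArg List.reverse hJr)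
        | cons a l =>
            rw [hJr] at hJrh
            have : a = 3 := by simpa using hJrh
            exact ⟨l, by rw [this]⟩
      have hndJ3 : ((3:ℕ) :: Jtl).Nodup := hJtl ▸ hndJr
      obtain ⟨S₂, D₂, y₂, hdec₂, hS₂ne, hy₂l, hcnt₂, hform₂, hbd₂⟩ := strip_split hndJ3
      have hJrd : J.reverse = S₂ ++ D₂ := by rw [hJtl, hdec₂]
      have hsubJ : ∀ a ∈ J.reverse, a ∈ J := fun a ha => List.mem_reverse.mp ha
      -- the strip must be ascending
      obtain ⟨ℓ₃, hS₂, hy₂⟩ : ∃ ℓ₃, S₂ = List.range' 3 (ℓ₃+1) ∧ y₂ = 3 + ℓ₃ := by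
        rcases hform₂ with ⟨ℓ₃, h1', h2'⟩ | ⟨ℓ₃, hl1', hlℓ', hS', hy'⟩
        · exact ⟨ℓ₃, h1', h2'⟩
        · exfalso
          have h2S : (2:ℕ) ∈ S₂ := by
            rw [hS', List.mem_reverse, List.mem_range'_1]
            omega
          have h2J : (2:ℕ) ∈ J := hsubJ 2 (by rw [hJrd]; exact List.mem_append_left _ h2S)
          have h2blk : (2:ℕ) ∈ List.range' 2 (0+1) := by rw [List.mem_range'_1]; omega
          exact (ne_of_append_nodup ((List.nodup_cons.mp hndt).2)
            h2J (List.mem_append_left _ h2blk)) rfl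
      have hJlen : J.length = S₂.length + D₂.length := by
        rw [← List.length_reverse (as := J), hJrd, length_append₂]
      have hS₂len : S₂.length = ℓ₃ + 1 := by rw [hS₂, List.length_range']
      -- elements of J are ≥ 3 where needed, via nodup with head 1
      have hJmem : ∀ a ∈ J, a ∈ J ++ (List.range' 2 (0+1) ++ W) :=
        fun a ha => List.mem_append_left _ ha
      have hWmem : ∀ a ∈ W, a ∈ J ++ (List.range' 2 (0+1) ++ W) :=
        fun a ha => List.mem_append_right _ (List.mem_append_right _ ha)
      have hJne1 : ∀ a ∈ J, a ≠ 1 := by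
        intro a ha h
        exact (List.nodup_cons.mp hndt).1 (h ▸ hJmem a ha)
      have hJne2 : ∀ a ∈ J, a ≠ 2 := by
        intro a ha
        exact ne_of_append_nodup ((List.nodup_cons.mp hndt).2) ha
          (List.mem_append_left _ (by rw [List.mem_range'_1]; omega))
      have hWne1 : ∀ a ∈ W, a ≠ 1 := by
        intro a ha h
        exact (List.nodup_cons.mp hndt).1 (h ▸ hWmem a ha)
      have hJWne : ∀ a ∈ J, ∀ b ∈ W, a ≠ b := by
        intro a ha b hb
        exact ne_of_append_nodup ((List.nodup_cons.mp hndt).2) ha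
          (List.mem_append_right _ hb)
      cases hD₂ : D₂ with
      | cons d₂ D₂' =>
          -- B2a : junk behind the strip of J.reverse
          rw [hD₂] at hJrd hbd₂
          have hgyd2 : g y₂ d₂ = 1 := hbd₂ d₂ rfl
          have hd₂J : d₂ ∈ J := hsubJ d₂ (by rw [hJrd]; simp)
          -- o₁ : reverse (1 :: J) ++ [2]
          have hA1h : (((1:ℕ) :: J) ++ List.range' 2 (0+1)).head? = some 1 := by
            rw [head?_append_left _ (by simp)]; rfl
          have hA1l : (((1:ℕ) :: J) ++ List.range' 2 (0+1)).getLast? = some 2 := by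
            rw [getLast?_append_right hblk2ne, range'_getLast?]
          have htA : (1:ℕ) :: (J ++ (List.range' 2 (0+1) ++ W))
              = (((1:ℕ) :: J) ++ List.range' 2 (0+1)) ++ W := by
            simp [List.append_assoc]
          have hlenA : ((((1:ℕ) :: J) ++ List.range' 2 (0+1)) ++ W).length = n + 1 := by
            rw [← htA]; exact hlent
          obtain ⟨hval1, happ1, hbp1⟩ :=
            rev_leaf (n := n) (((1:ℕ) :: J) ++ List.range' 2 (0+1)) W hlenA
              (by simp) hA1h hA1l hW1
          have hgsW' : g 2 W₁ = 1 := by simpa using hgsW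
          rw [hgsW', hg1W] at hbp1
          -- normal form for chase2
          have hTeq : ((((1:ℕ) :: J) ++ List.range' 2 (0+1)).reverse) ++ W
              = List.range' 2 (ℓ₃+2) ++ ((d₂ :: D₂') ++ ((1:ℕ) :: W)) := by
            have h1 : List.range' 2 (ℓ₃+2) = 2 :: List.range' 3 (ℓ₃+1) := by
              rw [range'_head]
            rw [h1]
            have h2 : ((1:ℕ) :: J).reverse = J.reverse ++ [1] := by simp
            simp only [List.reverse_append, h2, hJrd, hS₂]
            simp [List.range', List.append_assoc]
          have hrest : (d₂ :: D₂') ++ ((1:ℕ) :: W) = d₂ :: (D₂' ++ ((1:ℕ) :: W)) := by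
            simp
          have hSh2 : (List.range' 2 (ℓ₃+2)).head? = some 2 := by
            rw [range'_head]; rfl
          have hSl2 : (List.range' 2 (ℓ₃+2)).getLast? = some y₂ := by
            rw [range'_getLast?, hy₂]
            congr 1
            omega
          have hperm2 : (List.range' 2 (ℓ₃+2)
                ++ ((d₂ :: D₂') ++ ((1:ℕ) :: W))).Perm (List.range' 1 (n+1)) := by
            rw [← hTeq]
            exact (perm_rev_append _ _).trans ((htA ▸ (htt ▸ hperm)))
          have hnd2 := hperm2.symm.nodup (List.nodup_range' (s := 1) (n := n+1))
          have hlast2 : (List.range' 2 (ℓ₃+2)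
                ++ ((d₂ :: D₂') ++ ((1:ℕ) :: W))).getLast? = some (n+1) := by
            rw [← hTeq, getLast?_append_right hWne]
            rw [htA, getLast?_append_right hWne] at hlastt
            exact hlastt
          have hgyd : ∀ d ∈ ((d₂ :: D₂') ++ ((1:ℕ) :: W)).head?, g y₂ d = 1 := by
            intro d hd
            have : d₂ = d := by simpa using hd
            subst this
            exact hgyd2
          have hdne1 : ∀ d ∈ ((d₂ :: D₂') ++ ((1:ℕ) :: W)).head?, d ≠ 1 := by
            intro d hd
            have : d₂ = d := by simpa using hd
            subst this
            exact hJne1 d₂ hd₂J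
          -- view the rest as E ++ w :: F with E = d₂ :: D₂', w = 1, F = W
          have hTeq2 : (d₂ :: D₂') ++ ((1:ℕ) :: W) = (d₂ :: D₂') ++ (1:ℕ) :: W := rfl
          have hzne1 : ∀ z ∈ (List.range' 2 (ℓ₃+2) ++ (d₂ :: D₂')).getLast?, z ≠ 1 := by
            intro z hz
            rw [getLast?_append_right (by simp)] at hz
            have hzJ : z ∈ J := by
              refine hsubJ z ?_
              rw [hJrd]
              exact List.mem_append_right _ (mem_of_getLast' (Option.mem_def.mp hz))
            exact hJne1 z hzJ
          have hslen : 2 ≤ (List.range' 2 (ℓ₃+2)).length + (d₂ :: D₂').length := by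
            rw [List.length_range']
            omega
          obtain ⟨o₂, o₃, hv₂, hv₃, htr₂, htr₃, hbp₂₃⟩ :=
            chase2 n (List.range' 2 (ℓ₃+2)) (d₂ :: D₂') W 2 y₂ 1
              hperm2 hnd2 hlast2 hSh2 hSl2 hgyd (Or.inl rfl) hslen hdne1 hzne1
          refine ⟨revOp (((1:ℕ) :: J) ++ List.range' 2 (0+1)), o₂, o₃,
            hval1, hv₂, hv₃, rfl, htr₂, htr₃, ?_⟩
          rw [htt, htA, happ1]
          rw [hTeq] at hbp1 ⊢
          omega
      | nil =>
          -- B2b : J itself is the run [b..3] ; b = 3 + ℓ₃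
          rw [hD₂, List.append_nil] at hJrd
          have hJform : J = (List.range' 3 (ℓ₃+1)).reverse := by
            rw [← List.reverse_reverse J, hJrd, hS₂]
          have hJlen' : J.length = ℓ₃ + 1 := by
            rw [hJform, List.length_reverse, List.length_range']
          have hJval : ∀ a, a ∈ J ↔ (3 ≤ a ∧ a < ℓ₃ + 4) := by
            intro a
            rw [hJform, List.mem_reverse, List.mem_range'_1]
            omega
          -- membership of W₁ forces W₁ ≥ b + 1 = ℓ₃ + 4
          have hW1big : ℓ₃ + 4 ≤ W₁ := by
            by_contra hc
            push_neg at hc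
            have : W₁ ∈ J := (hJval W₁).mpr ⟨by omega, hc⟩
            exact hJWne W₁ this W₁ hW1W rfl
          have hR2 : J ++ List.range' 2 (0+1) = (List.range' 2 (ℓ₃+2)).reverse := by
            rw [hJform]
            have h1 : List.range' 2 (ℓ₃+2) = 2 :: List.range' 3 (ℓ₃+1) := by
              rw [range'_head]
            rw [h1, List.reverse_cons]
            rfl
          have httβ : (1:ℕ) :: u = ((1:ℕ) :: (List.range' 2 (ℓ₃+2)).reverse) ++ W := by
            rw [htt, ← hR2]
            simp [List.append_assoc]
          have hlenβ : (((1:ℕ) :: (List.range' 2 (ℓ₃+2)).reverse) ++ W).length = n + 1 := by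
            rw [← httβ]; exact hlen
          have hWlen : 1 ≤ W.length := List.length_pos_iff.mpr hWne
          have hlenn : ℓ₃ + 3 + W.length = n + 1 := by
            rw [length_append₂, List.length_cons, List.length_reverse,
              List.length_range'] at hlenβ
            omega
          by_cases hadj : (3 + ℓ₃) + 1 = W₁ ∨ W₁ + 1 = 3 + ℓ₃
          · -- βββ : three reversals sort the prefix
            have hgb0 : g (3 + ℓ₃) W₁ = 0 := g_eq_zero hadj
            refine ⟨revOp ((1:ℕ) :: (List.range' 2 (ℓ₃+2)).reverse),
              revOp (List.range' 2 (ℓ₃+2)),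
              revOp ((List.range' 2 (ℓ₃+2)).reverse ++ [1]),
              revOp_valid (by simp) (by simp; omega),
              revOp_valid (by rw [List.length_range']; omega)
                (by rw [List.length_range']; omega),
              revOp_valid (by simp) (by simp [List.length_range']; omega),
              rfl, by simp, by simp, ?_⟩
            rw [httβ, revOp_apply]
            have hT1 : ((1:ℕ) :: (List.range' 2 (ℓ₃+2)).reverse).reverse ++ W
                = List.range' 2 (ℓ₃+2) ++ ((1:ℕ) :: W) := by
              simp
            rw [hT1, revOp_apply]
            have hT2 : (List.range' 2 (ℓ₃+2)).reverse ++ ((1:ℕ) :: W)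
                = ((List.range' 2 (ℓ₃+2)).reverse ++ [1]) ++ W := by
              simp [List.append_assoc]
            rw [hT2, revOp_apply]
            have hrev3 : ((List.range' 2 (ℓ₃+2)).reverse ++ [(1:ℕ)]).reverse
                = List.range' 1 (ℓ₃+3) := by
              rw [List.reverse_append, List.reverse_reverse]
              have : List.range' 1 (ℓ₃+3) = 1 :: List.range' 2 (ℓ₃+2) := by
                rw [range'_head]
              rw [this]
              rfl
            rw [hrev3]
            -- compute both breakpoint counts
            have hfin : bp (0 :: (List.range' 1 (ℓ₃+3) ++ W)) = 1 + cnt W := by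
              rw [bp_cons, cnt_append, cnt_range',
                lk2_eq (range'_getLast? 1 (ℓ₃+2)) hW1]
              have h14 : 1 + (ℓ₃ + 2) = 3 + ℓ₃ := by omega
              rw [h14, hgb0]
              omega
            have hR2h : ((List.range' 2 (ℓ₃+2)).reverse).head? = some (3+ℓ₃) := by
              rw [List.head?_reverse, range'_getLast?]
              congr 1
              omega
            have horig : bp (0 :: (((1:ℕ) :: (List.range' 2 (ℓ₃+2)).reverse) ++ W))
                = 3 + cnt W := by
              rw [bp_cons]
              have h1 : ((1:ℕ) :: (List.range' 2 (ℓ₃+2)).reverse) ++ W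
                  = [(1:ℕ)] ++ ((List.range' 2 (ℓ₃+2)).reverse ++ W) := by simp
              rw [h1, cnt_append, cnt_append]
              rw [lk2_eq (show ([(1:ℕ)]).getLast? = some 1 from rfl) (by
                rw [head?_append_left _ (by simp), hR2h])]
              rw [lk2_eq (by rw [List.getLast?_reverse, range'_head]; rfl) hW1]
              have hg13 : g 1 (3+ℓ₃) = 1 := g_eq_one (by omega) (by omega)
              have hg2W : g 2 W₁ = 1 := by simpa using hgsW
              rw [hg13, hg2W, cnt_reverse_range', cnt_single]
              omega
            rw [hfin, horig]
            omega
          · -- W has an inner breakpoint : strip of W and chase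
            have hgb1 : g (3 + ℓ₃) W₁ = 1 :=
              g_eq_one (fun h => hadj (Or.inl h)) (fun h => hadj (Or.inr h))
            have hndW : W.Nodup :=
              (((List.nodup_cons.mp hndt).2).of_append_right).of_append_right
            obtain ⟨Wtl, rfl⟩ : ∃ l, W = W₁ :: l := by
              cases W with
              | nil => exact absurd rfl hWne
              | cons a l =>
                  have : a = W₁ := by simpa using hW1
                  exact ⟨l, by rw [this]⟩
            obtain ⟨G, H, c, hdecW, hGne, hcl, hcntG, hformW, hbdW⟩ := strip_split hndW
            have hWGH : W₁ :: Wtl = G ++ H := hdecW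
            have hWlast : (W₁ :: Wtl).getLast? = some (n+1) := by
              have h' := hlastt
              rw [show (1:ℕ) :: (J ++ (List.range' 2 (0+1) ++ (W₁ :: Wtl)))
                  = (((1:ℕ) :: J) ++ List.range' 2 (0+1)) ++ (W₁ :: Wtl) by
                simp [List.append_assoc]] at h'
              rwa [getLast?_append_right (by simp)] at h'
            have hWbig : ∀ a ∈ W₁ :: Wtl, ℓ₃ + 4 ≤ a := by
              intro a ha
              have hab := mem_bounds hperm (by
                rw [htt]
                exact List.mem_cons_of_mem _
                  (List.mem_append_right _ (List.mem_append_right _ ha)))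
              by_contra hc
              push_neg at hc
              have ha1 : a ≠ 1 := hWne1 a ha
              have ha2 : a ≠ 2 := by
                have h2blk : (2:ℕ) ∈ List.range' 2 (0+1) := by
                  rw [List.mem_range'_1]; omega
                exact (ne_of_append_nodup (((List.nodup_cons.mp hndt).2).of_append_right)
                  h2blk ha).symm
              have haJ : a ∈ J := (hJval a).mpr ⟨by omega, by omega⟩
              exact hJWne a haJ a ha rfl
            have hGh : G.head? = some W₁ := by
              have h' := congrArg List.head? hdecW
              rw [head?_append_left _ hGne] at h'
              exact h'.symm
            have hcG : c ∈ G := mem_of_getLast' hcl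
            have hcW : c ∈ W₁ :: Wtl := by rw [hWGH]; exact List.mem_append_left _ hcG
            have hcbig : ℓ₃ + 4 ≤ c := hWbig c hcW
            have hcbd := mem_bounds hperm (by
              rw [htt]
              exact List.mem_cons_of_mem _
                (List.mem_append_right _ (List.mem_append_right _ hcW)))
            cases hH : H with
            | nil =>
                exfalso
                rw [hH, List.append_nil] at hWGH
                rcases hformW with ⟨ℓG, hG, hc⟩ | ⟨ℓG, hl1G, hlWG, hGd, hcd⟩
                · -- ascending run covering all of W : forces W₁ = b+1
                  have hbn : ℓ₃ + 3 ≤ n := by omega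
                  have hbm : (ℓ₃ + 4) ∈ (1:ℕ) :: (J ++ (List.range' 2 (0+1) ++ (W₁ :: Wtl))) := by
                    rw [← htt]
                    exact mem_of_bounds hperm (by omega) (by omega)
                  have hbW : (ℓ₃+4) ∈ W₁ :: Wtl := by
                    rcases List.mem_cons.mp hbm with h' | h'
                    · omega
                    · rcases List.mem_append.mp h' with h'' | h''
                      · rw [hJval] at h''; omega
                      · rcases List.mem_append.mp h'' with h3 | h3
                        · rw [List.mem_range'_1] at h3; omega
                        · exact h3
                  rw [hWGH, hG, List.mem_range'_1] at hbW
                  have : W₁ = ℓ₃ + 4 := by omega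
                  exact hadj (Or.inl (by omega))
                · -- descending run ending at the maximum : impossible
                  rw [hWGH, hGd, List.getLast?_reverse, range'_head] at hWlast
                  have : W₁ - ℓG = n + 1 := by simpa using hWlast
                  omega
            | cons h₁ Htl =>
            rw [hH] at hWGH hbdW
            have hgch : g c h₁ = 1 := hbdW h₁ rfl
            have hh₁W : h₁ ∈ W₁ :: Wtl := by rw [hWGH]; simp
            have hh₁big : ℓ₃ + 4 ≤ h₁ := hWbig h₁ hh₁W
            have hHlast : (h₁ :: Htl).getLast? = some (n+1) := by
              rw [hWGH, getLast?_append_right (by simp)] at hWlast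
              exact hWlast
            have hnplusH : (n+1) ∈ h₁ :: Htl := mem_of_getLast' hHlast
            have hcn : c ≠ n + 1 := by
              have hndW2 : (G ++ (h₁ :: Htl)).Nodup := hWGH ▸ hndW
              exact ne_of_append_nodup hndW2 hcG hnplusH
            -- o₁ : reverse 1 :: [b..2] ++ G
            have htγ : (1:ℕ) :: u = (((1:ℕ) :: (List.range' 2 (ℓ₃+2)).reverse) ++ G)
                ++ (h₁ :: Htl) := by
              rw [httβ, hWGH]
              simp [List.append_assoc]
            have hAh : (((1:ℕ) :: (List.range' 2 (ℓ₃+2)).reverse) ++ G).head? = some 1 := by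
              rw [head?_append_left _ (by simp)]; rfl
            have hAl : (((1:ℕ) :: (List.range' 2 (ℓ₃+2)).reverse) ++ G).getLast?
                = some c := by
              rw [getLast?_append_right hGne]; exact hcl
            have hlenγ : ((((1:ℕ) :: (List.range' 2 (ℓ₃+2)).reverse) ++ G)
                ++ (h₁ :: Htl)).length = n + 1 := by
              rw [← htγ]; exact hlen
            obtain ⟨hval1, happ1, hbp1⟩ :=
              rev_leaf (n := n) (((1:ℕ) :: (List.range' 2 (ℓ₃+2)).reverse) ++ G)
                (h₁ :: Htl) hlenγ (by simp; omega) hAh hAl rfl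
            have hg1h₁ : g 1 h₁ = 1 := g_eq_one (by omega) (by omega)
            rw [hgch, hg1h₁] at hbp1
            have hTeqγ : ((((1:ℕ) :: (List.range' 2 (ℓ₃+2)).reverse) ++ G).reverse)
                ++ (h₁ :: Htl)
                = G.reverse ++ (List.range' 2 (ℓ₃+2) ++ ((1:ℕ) :: (h₁ :: Htl))) := by
              simp [List.reverse_append, List.append_assoc]
            have hShγ : (G.reverse).head? = some c := by
              rw [List.head?_reverse]; exact hcl
            have hSlγ : (G.reverse).getLast? = some W₁ := by
              rw [List.getLast?_reverse]; exact hGh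
            have hgW₁2 : g W₁ 2 = 1 := g_eq_one (by omega) (by omega)
            -- helper for membership of chase targets in H
            have hmemH : ∀ a, 1 ≤ a → a ≤ n + 1 → ℓ₃ + 4 ≤ a → a ∉ G →
                a ∈ h₁ :: Htl := by
              intro a ha1 ha2 ha3 haG
              have ham : a ∈ (1:ℕ) :: (J ++ (List.range' 2 (0+1) ++ (W₁ :: Wtl))) := by
                rw [← htt]; exact mem_of_bounds hperm ha1 ha2
              rcases List.mem_cons.mp ham with h' | h'
              · omega
              · rcases List.mem_append.mp h' with h'' | h''
                · rw [hJval] at h''; omega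
                · rcases List.mem_append.mp h'' with h3 | h3
                  · rw [List.mem_range'_1] at h3; omega
                  · rw [hWGH] at h3
                    rcases List.mem_append.mp h3 with h4 | h4
                    · exact absurd h4 haG
                    · exact h4
            rcases hformW with ⟨ℓG, hG, hc⟩ | ⟨ℓG, hl1G, hlWG, hGd, hcd⟩
            · -- G ascending (or a singleton) : chase c+1 inside H
              have hwH : (c+1) ∈ h₁ :: Htl := by
                refine hmemH (c+1) (by omega) (by omega) (by omega) ?_
                rw [hG, List.mem_range'_1]
                omega
              obtain ⟨H', H'', hHsp⟩ := List.append_of_mem hwH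
              have hH'ne : H' ≠ [] := by
                intro h'
                rw [h'] at hHsp
                have hcon : h₁ = c + 1 ∧ Htl = H'' := by simpa using hHsp
                rw [hcon.1] at hgch
                rw [g_eq_zero (Or.inl rfl)] at hgch
                omega
              have hTsp : List.range' 2 (ℓ₃+2) ++ ((1:ℕ) :: (h₁ :: Htl))
                  = (List.range' 2 (ℓ₃+2) ++ ((1:ℕ) :: H')) ++ (c+1) :: H'' := by
                rw [hHsp]
                simp [List.append_assoc]
              have hperm2 : (G.reverse ++ ((List.range' 2 (ℓ₃+2) ++ ((1:ℕ) :: H'))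
                    ++ (c+1) :: H'')).Perm (List.range' 1 (n+1)) := by
                rw [← hTsp, ← hTeqγ]
                exact (perm_rev_append _ _).trans (htγ ▸ hperm)
              have hnd2 := hperm2.symm.nodup (List.nodup_range' (s := 1) (n := n+1))
              have hlast2 : (G.reverse ++ ((List.range' 2 (ℓ₃+2) ++ ((1:ℕ) :: H'))
                    ++ (c+1) :: H'')).getLast? = some (n+1) := by
                rw [← hTsp, getLast?_append_right (by simp),
                  getLast?_append_right (by simp)]
                rw [show ((1:ℕ) :: (h₁ :: Htl)) = [(1:ℕ)] ++ (h₁ :: Htl) from rfl,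
                  getLast?_append_right (by simp)]
                exact hHlast
              have hrsth : ((List.range' 2 (ℓ₃+2) ++ ((1:ℕ) :: H'))
                  ++ (c+1) :: H'').head? = some 2 := by
                rw [head?_append_left _ (by simp [hblk2ne]),
                  head?_append_left _ (by rw [range'_head]; simp), range'_head]
                rfl
              have hgyd : ∀ d ∈ ((List.range' 2 (ℓ₃+2) ++ ((1:ℕ) :: H'))
                  ++ (c+1) :: H'').head?, g W₁ d = 1 := by
                intro d hd
                rw [hrsth] at hd
                have : (2:ℕ) = d := by simpa using hd
                subst this
                exact hgW₁2
              have hdne1 : ∀ d ∈ ((List.range' 2 (ℓ₃+2) ++ ((1:ℕ) :: H'))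
                  ++ (c+1) :: H'').head?, d ≠ 1 := by
                intro d hd
                rw [hrsth] at hd
                have : (2:ℕ) = d := by simpa using hd
                omega
              have hzne1 : ∀ z ∈ (G.reverse ++ (List.range' 2 (ℓ₃+2)
                  ++ ((1:ℕ) :: H'))).getLast?, z ≠ 1 := by
                intro z hz
                rw [getLast?_append_right (by simp [hblk2ne]),
                  getLast?_append_right (by simp)] at hz
                cases hH' : H' with
                | nil => exact absurd hH' hH'ne
                | cons a l =>
                    rw [hH', List.getLast?_cons_cons] at hz
                    have hzW : z ∈ W₁ :: Wtl := by
                      rw [hWGH, hHsp, hH']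
                      exact List.mem_append_right _ (List.mem_append_left _
                        (mem_of_getLast' (Option.mem_def.mp hz)))
                    exact hWne1 z hzW
              have hslen : 2 ≤ (G.reverse).length
                  + (List.range' 2 (ℓ₃+2) ++ ((1:ℕ) :: H')).length := by
                rw [length_append₂, List.length_range']
                omega
              obtain ⟨o₂, o₃, hv₂, hv₃, htr₂, htr₃, hbp₂₃⟩ :=
                chase2 n (G.reverse) (List.range' 2 (ℓ₃+2) ++ ((1:ℕ) :: H')) H''
                  c W₁ (c+1) hperm2 hnd2 hlast2 hShγ hSlγ hgyd (Or.inr rfl)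
                  hslen hdne1 hzne1
              refine ⟨revOp (((1:ℕ) :: (List.range' 2 (ℓ₃+2)).reverse) ++ G), o₂, o₃,
                hval1, hv₂, hv₃, rfl, htr₂, htr₃, ?_⟩
              rw [htγ, happ1]
              rw [hTeqγ, hTsp] at hbp1 ⊢
              omega
            · -- G descending : chase c-1 (either b itself or inside H)
              have hcW₁eq : c + ℓG = W₁ := by omega
              by_cases hcb : c = ℓ₃ + 4
              · -- c = b+1 : target b sits at the end of the block
                have hTsp : List.range' 2 (ℓ₃+2) ++ ((1:ℕ) :: (h₁ :: Htl))
                    = (List.range' 2 (ℓ₃+1)) ++ (ℓ₃+3) :: ((1:ℕ) :: (h₁ :: Htl)) := by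
                  rw [range'_concat' 2 (ℓ₃+1)]
                  have : 2 + (ℓ₃+1) = ℓ₃ + 3 := by omega
                  rw [this]
                  simp [List.append_assoc]
                have hperm2 : (G.reverse ++ ((List.range' 2 (ℓ₃+1))
                      ++ (ℓ₃+3) :: ((1:ℕ) :: (h₁ :: Htl)))).Perm (List.range' 1 (n+1)) := by
                  rw [← hTsp, ← hTeqγ]
                  exact (perm_rev_append _ _).trans (htγ ▸ hperm)
                have hnd2 := hperm2.symm.nodup (List.nodup_range' (s := 1) (n := n+1))
                have hlast2 : (G.reverse ++ ((List.range' 2 (ℓ₃+1))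
                      ++ (ℓ₃+3) :: ((1:ℕ) :: (h₁ :: Htl)))).getLast? = some (n+1) := by
                  rw [← hTsp, getLast?_append_right (by simp),
                    getLast?_append_right (by simp)]
                  rw [show ((1:ℕ) :: (h₁ :: Htl)) = [(1:ℕ)] ++ (h₁ :: Htl) from rfl,
                    getLast?_append_right (by simp)]
                  exact hHlast
                have hrsth : ((List.range' 2 (ℓ₃+1))
                    ++ (ℓ₃+3) :: ((1:ℕ) :: (h₁ :: Htl))).head? = some 2 := by
                  rw [head?_append_left _ (by rw [range'_head]; simp), range'_head]
                  rfl
                have hgyd : ∀ d ∈ ((List.range' 2 (ℓ₃+1))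
                    ++ (ℓ₃+3) :: ((1:ℕ) :: (h₁ :: Htl))).head?, g W₁ d = 1 := by
                  intro d hd
                  rw [hrsth] at hd
                  have : (2:ℕ) = d := by simpa using hd
                  subst this
                  exact hgW₁2
                have hdne1 : ∀ d ∈ ((List.range' 2 (ℓ₃+1))
                    ++ (ℓ₃+3) :: ((1:ℕ) :: (h₁ :: Htl))).head?, d ≠ 1 := by
                  intro d hd
                  rw [hrsth] at hd
                  have : (2:ℕ) = d := by simpa using hd
                  omega
                have hzne1 : ∀ z ∈ (G.reverse ++ List.range' 2 (ℓ₃+1)).getLast?,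
                    z ≠ 1 := by
                  intro z hz
                  rw [getLast?_append_right (by rw [range'_head]; simp),
                    range'_getLast?] at hz
                  have : 2 + ℓ₃ = z := by simpa using hz
                  omega
                have hslen : 2 ≤ (G.reverse).length + (List.range' 2 (ℓ₃+1)).length := by
                  rw [List.length_reverse, List.length_range']
                  have := List.length_pos_iff.mpr hGne
                  omega
                obtain ⟨o₂, o₃, hv₂, hv₃, htr₂, htr₃, hbp₂₃⟩ :=
                  chase2 n (G.reverse) (List.range' 2 (ℓ₃+1)) ((1:ℕ) :: (h₁ :: Htl))
                    c W₁ (ℓ₃+3) hperm2 hnd2 hlast2 hShγ hSlγ hgyd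
                    (Or.inl (by omega)) hslen hdne1 hzne1
                refine ⟨revOp (((1:ℕ) :: (List.range' 2 (ℓ₃+2)).reverse) ++ G), o₂, o₃,
                  hval1, hv₂, hv₃, rfl, htr₂, htr₃, ?_⟩
                rw [htγ, happ1]
                rw [hTeqγ, hTsp] at hbp1 ⊢
                omega
              · -- c ≥ b+2 : chase c-1 inside H
                obtain ⟨w, hwc⟩ : ∃ w, w + 1 = c := ⟨c - 1, by omega⟩
                have hwH : w ∈ h₁ :: Htl := by
                  refine hmemH w (by omega) (by omega) (by omega) ?_
                  rw [hGd, List.mem_reverse, List.mem_range'_1]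
                  omega
                obtain ⟨H', H'', hHsp⟩ := List.append_of_mem hwH
                have hH'ne : H' ≠ [] := by
                  intro h'
                  rw [h'] at hHsp
                  have hcon : h₁ = w ∧ Htl = H'' := by simpa using hHsp
                  rw [hcon.1, ← hwc] at hgch
                  rw [g_eq_zero (Or.inr rfl)] at hgch
                  omega
                have hTsp : List.range' 2 (ℓ₃+2) ++ ((1:ℕ) :: (h₁ :: Htl))
                    = (List.range' 2 (ℓ₃+2) ++ ((1:ℕ) :: H')) ++ w :: H'' := by
                  rw [hHsp]
                  simp [List.append_assoc]
                have hperm2 : (G.reverse ++ ((List.range' 2 (ℓ₃+2) ++ ((1:ℕ) :: H'))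
                      ++ w :: H'')).Perm (List.range' 1 (n+1)) := by
                  rw [← hTsp, ← hTeqγ]
                  exact (perm_rev_append _ _).trans (htγ ▸ hperm)
                have hnd2 := hperm2.symm.nodup (List.nodup_range' (s := 1) (n := n+1))
                have hlast2 : (G.reverse ++ ((List.range' 2 (ℓ₃+2) ++ ((1:ℕ) :: H'))
                      ++ w :: H'')).getLast? = some (n+1) := by
                  rw [← hTsp, getLast?_append_right (by simp),
                    getLast?_append_right (by simp)]
                  rw [show ((1:ℕ) :: (h₁ :: Htl)) = [(1:ℕ)] ++ (h₁ :: Htl) from rfl,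
                    getLast?_append_right (by simp)]
                  exact hHlast
                have hrsth : ((List.range' 2 (ℓ₃+2) ++ ((1:ℕ) :: H'))
                    ++ w :: H'').head? = some 2 := by
                  rw [head?_append_left _ (by simp [hblk2ne]),
                    head?_append_left _ (by rw [range'_head]; simp), range'_head]
                  rfl
                have hgyd : ∀ d ∈ ((List.range' 2 (ℓ₃+2) ++ ((1:ℕ) :: H'))
                    ++ w :: H'').head?, g W₁ d = 1 := by
                  intro d hd
                  rw [hrsth] at hd
                  have : (2:ℕ) = d := by simpa using hd
                  subst this
                  exact hgW₁2
                have hdne1 : ∀ d ∈ ((List.range' 2 (ℓ₃+2) ++ ((1:ℕ) :: H'))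
                    ++ w :: H'').head?, d ≠ 1 := by
                  intro d hd
                  rw [hrsth] at hd
                  have : (2:ℕ) = d := by simpa using hd
                  omega
                have hzne1 : ∀ z ∈ (G.reverse ++ (List.range' 2 (ℓ₃+2)
                    ++ ((1:ℕ) :: H'))).getLast?, z ≠ 1 := by
                  intro z hz
                  rw [getLast?_append_right (by simp [hblk2ne]),
                    getLast?_append_right (by simp)] at hz
                  cases hH' : H' with
                  | nil => exact absurd hH' hH'ne
                  | cons a l =>
                      rw [hH', List.getLast?_cons_cons] at hz
                      have hzW : z ∈ W₁ :: Wtl := by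
                        rw [hWGH, hHsp, hH']
                        exact List.mem_append_right _ (List.mem_append_left _
                          (mem_of_getLast' (Option.mem_def.mp hz)))
                      exact hWne1 z hzW
                have hslen : 2 ≤ (G.reverse).length
                    + (List.range' 2 (ℓ₃+2) ++ ((1:ℕ) :: H')).length := by
                  rw [length_append₂, List.length_range']
                  omega
                obtain ⟨o₂, o₃, hv₂, hv₃, htr₂, htr₃, hbp₂₃⟩ :=
                  chase2 n (G.reverse) (List.range' 2 (ℓ₃+2) ++ ((1:ℕ) :: H')) H''
                    c W₁ w hperm2 hnd2 hlast2 hShγ hSlγ hgyd (Or.inl hwc)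
                    hslen hdne1 hzne1
                refine ⟨revOp (((1:ℕ) :: (List.range' 2 (ℓ₃+2)).reverse) ++ G), o₂, o₃,
                  hval1, hv₂, hv₃, rfl, htr₂, htr₃, ?_⟩
                rw [htγ, happ1]
                rw [hTeqγ, hTsp] at hbp1 ⊢
                omega


    · -- B1 : xJ ≠ 3
      -- o₁ : reverse (1 :: J) ++ [2..s]
      have hA1h : (((1:ℕ) :: J) ++ List.range' 2 (ℓ₂+1)).head? = some 1 := by
        rw [head?_append_left _ (by simp)]; rfl
      have hA1l : (((1:ℕ) :: J) ++ List.range' 2 (ℓ₂+1)).getLast? = some (2+ℓ₂) := by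
        rw [getLast?_append_right hblk2ne, range'_getLast?]
      have htA : (1:ℕ) :: (J ++ (List.range' 2 (ℓ₂+1) ++ W))
          = (((1:ℕ) :: J) ++ List.range' 2 (ℓ₂+1)) ++ W := by
        simp [List.append_assoc]
      have hlenA : ((((1:ℕ) :: J) ++ List.range' 2 (ℓ₂+1)) ++ W).length = n + 1 := by
        rw [← htA]; exact hlent
      obtain ⟨hval1, happ1, hbp1⟩ :=
        rev_leaf (n := n) (((1:ℕ) :: J) ++ List.range' 2 (ℓ₂+1)) W hlenA
          (by simp; omega) hA1h hA1l hW1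
      rw [hgsW, hg1W] at hbp1
      -- shape of the reversed prefix
      have hA1r : ((((1:ℕ) :: J) ++ List.range' 2 (ℓ₂+1)).reverse) ++ W
          = (List.range' 2 (ℓ₂+1)).reverse ++ (J.reverse ++ ((1:ℕ) :: W)) := by
        simp [List.reverse_append, List.append_assoc]
      have hSh : ((List.range' 2 (ℓ₂+1)).reverse).head? = some (2+ℓ₂) := by
        rw [List.head?_reverse, range'_getLast?]
      have hSl : ((List.range' 2 (ℓ₂+1)).reverse).getLast? = some 2 := by
        rw [List.getLast?_reverse, range'_head]; rfl
      -- locate s+1 = ℓ₂+3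
      have hsn : ℓ₂ + 3 ≤ n + 1 := by
        rw [List.length_cons, length_append₂, length_append₂, List.length_range'] at hlent
        have := List.length_pos_iff.mpr hJne
        have := List.length_pos_iff.mpr hWne
        omega
      have hwm : ℓ₂ + 3 ∈ (1:ℕ) :: (J ++ (List.range' 2 (ℓ₂+1) ++ W)) := by
        rw [← htt]; exact mem_of_bounds hperm (by omega) (by omega)
      have hwJW : (ℓ₂ + 3 ∈ J) ∨ (ℓ₂ + 3 ∈ W) := by
        rcases List.mem_cons.mp hwm with h1' | hwm'
        · omega
        · rcases List.mem_append.mp hwm' with h | h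
          · exact Or.inl h
          · rcases List.mem_append.mp h with h' | h'
            · exfalso; rw [List.mem_range'_1] at h'; omega
            · exact Or.inr h'
      rcases hwJW with hwJ | hwW
      · -- ii-a : s+1 lies in J
        have hwJr : ℓ₂ + 3 ∈ J.reverse := by rwa [List.mem_reverse]
        obtain ⟨E, F, hEF⟩ := List.append_of_mem hwJr
        have hTeq : ((((1:ℕ) :: J) ++ List.range' 2 (ℓ₂+1)).reverse) ++ W
            = (List.range' 2 (ℓ₂+1)).reverse
              ++ (E ++ (ℓ₂+3) :: (F ++ ((1:ℕ) :: W))) := by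
          rw [hA1r, hEF]
          simp [List.append_assoc]
        have hresth : (E ++ (ℓ₂+3) :: (F ++ ((1:ℕ) :: W))).head? = some xJ := by
          have h1 : E ++ (ℓ₂+3) :: (F ++ ((1:ℕ) :: W)) = J.reverse ++ ((1:ℕ) :: W) := by
            rw [hEF]; simp [List.append_assoc]
          rw [h1, head?_append_left _ (by simpa using hJne), hJrh]
        have hperm2 : ((List.range' 2 (ℓ₂+1)).reverse
              ++ (E ++ (ℓ₂+3) :: (F ++ ((1:ℕ) :: W)))).Perm (List.range' 1 (n+1)) := by
          rw [← hTeq]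
          exact (perm_rev_append _ _).trans ((htA ▸ (htt ▸ hperm)))
        have hnd2 := hperm2.symm.nodup (List.nodup_range' (s := 1) (n := n+1))
        have hlast2 : ((List.range' 2 (ℓ₂+1)).reverse
              ++ (E ++ (ℓ₂+3) :: (F ++ ((1:ℕ) :: W)))).getLast? = some (n+1) := by
          rw [← hTeq, getLast?_append_right hWne]
          rw [htA, getLast?_append_right hWne] at hlastt
          exact hlastt
        have hgyd : ∀ d ∈ (E ++ (ℓ₂+3) :: (F ++ ((1:ℕ) :: W))).head?, g 2 d = 1 := by
          intro d hd
          rw [hresth] at hd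
          have : xJ = d := by simpa using hd
          subst this
          exact g_eq_one (by omega) (by omega)
        have hdne1 : ∀ d ∈ (E ++ (ℓ₂+3) :: (F ++ ((1:ℕ) :: W))).head?, d ≠ 1 := by
          intro d hd
          rw [hresth] at hd
          have : xJ = d := by simpa using hd
          omega
        have hEJ : ∀ a ∈ E, a ∈ J := by
          intro a ha
          rw [← List.mem_reverse, hEF]
          exact List.mem_append_left _ ha
        have hzne1 : ∀ z ∈ ((List.range' 2 (ℓ₂+1)).reverse ++ E).getLast?, z ≠ 1 := by
          intro z hz
          cases hE : E with
          | nil =>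
              rw [hE, List.append_nil, hSl] at hz
              have : (2:ℕ) = z := by simpa using hz
              omega
          | cons e E' =>
              rw [getLast?_append_right (by simp [hE])] at hz
              have hzE : z ∈ E := mem_of_getLast' (Option.mem_def.mp hz)
              intro h
              exact (List.nodup_cons.mp hndt).1
                (h ▸ (List.mem_append_left _ (hEJ z hzE)))
        have hslen : 2 ≤ ((List.range' 2 (ℓ₂+1)).reverse).length + E.length := by
          rw [List.length_reverse, List.length_range']
          rcases Nat.eq_zero_or_pos ℓ₂ with h0 | h0
          · cases hE : E with
            | nil =>
                exfalso
                rw [hE] at hEF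
                have : xJ = ℓ₂ + 3 := by
                  rw [hEF] at hJrh
                  simpa using hJrh.symm
                omega
            | cons e E' => simp [hE]; omega
          · omega
        obtain ⟨o₂, o₃, hv₂, hv₃, htr₂, htr₃, hbp₂₃⟩ :=
          chase2 n ((List.range' 2 (ℓ₂+1)).reverse) E (F ++ ((1:ℕ) :: W)) (2+ℓ₂) 2 (ℓ₂+3)
            hperm2 hnd2 hlast2 hSh hSl hgyd (Or.inr (by omega)) hslen hdne1 hzne1
        refine ⟨revOp (((1:ℕ) :: J) ++ List.range' 2 (ℓ₂+1)), o₂, o₃,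
          hval1, hv₂, hv₃, rfl, htr₂, htr₃, ?_⟩
        rw [htt, htA, happ1]
        rw [hTeq] at hbp1 ⊢
        omega
      · -- ii-b : s+1 lies in W
        obtain ⟨W', W'', hEF⟩ := List.append_of_mem hwW
        have hW'ne : W' ≠ [] := by
          intro h
          rw [h] at hEF
          simp at hEF
          have : W.head? = some (ℓ₂+3) := by rw [hEF]; rfl
          rw [hW1] at this
          have : W₁ = ℓ₂ + 3 := by simpa using this
          omega
        have hTeq : ((((1:ℕ) :: J) ++ List.range' 2 (ℓ₂+1)).reverse) ++ W
            = (List.range' 2 (ℓ₂+1)).reverse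
              ++ ((J.reverse ++ ((1:ℕ) :: W')) ++ (ℓ₂+3) :: W'') := by
          rw [hA1r, hEF]
          simp [List.append_assoc]
        have hresth : ((J.reverse ++ ((1:ℕ) :: W')) ++ (ℓ₂+3) :: W'').head? = some xJ := by
          rw [head?_append_left _ (by simp [hJne]),
            head?_append_left _ (by simpa using hJne), hJrh]
        have hperm2 : ((List.range' 2 (ℓ₂+1)).reverse
              ++ ((J.reverse ++ ((1:ℕ) :: W')) ++ (ℓ₂+3) :: W'')).Perm
              (List.range' 1 (n+1)) := by
          rw [← hTeq]
          exact (perm_rev_append _ _).trans ((htA ▸ (htt ▸ hperm)))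
        have hnd2 := hperm2.symm.nodup (List.nodup_range' (s := 1) (n := n+1))
        have hlast2 : ((List.range' 2 (ℓ₂+1)).reverse
              ++ ((J.reverse ++ ((1:ℕ) :: W')) ++ (ℓ₂+3) :: W'')).getLast?
              = some (n+1) := by
          rw [← hTeq, getLast?_append_right hWne]
          rw [htA, getLast?_append_right hWne] at hlastt
          exact hlastt
        have hgyd : ∀ d ∈ ((J.reverse ++ ((1:ℕ) :: W')) ++ (ℓ₂+3) :: W'').head?,
            g 2 d = 1 := by
          intro d hd
          rw [hresth] at hd
          have : xJ = d := by simpa using hd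
          subst this
          exact g_eq_one (by omega) (by omega)
        have hdne1 : ∀ d ∈ ((J.reverse ++ ((1:ℕ) :: W')) ++ (ℓ₂+3) :: W'').head?,
            d ≠ 1 := by
          intro d hd
          rw [hresth] at hd
          have : xJ = d := by simpa using hd
          omega
        have hzne1 : ∀ z ∈ ((List.range' 2 (ℓ₂+1)).reverse
              ++ (J.reverse ++ ((1:ℕ) :: W'))).getLast?, z ≠ 1 := by
          intro z hz
          have h1 : ((List.range' 2 (ℓ₂+1)).reverse
              ++ (J.reverse ++ ((1:ℕ) :: W'))).getLast? = ((1:ℕ) :: W').getLast? := by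
            rw [getLast?_append_right (by simp), getLast?_append_right (by simp)]
          rw [h1] at hz
          cases hW' : W' with
          | nil => exact absurd hW' hW'ne
          | cons a l =>
              rw [hW', List.getLast?_cons_cons] at hz
              have hzW : z ∈ W := by
                rw [hEF]
                exact List.mem_append_left _ (by rw [hW']; exact mem_of_getLast' hz)
              intro h
              refine (List.nodup_cons.mp hndt).1 (h ▸ ?_)
              exact List.mem_append_right _ (List.mem_append_right _ hzW)
        have hslen : 2 ≤ ((List.range' 2 (ℓ₂+1)).reverse).length
            + (J.reverse ++ ((1:ℕ) :: W')).length := by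
          rw [List.length_reverse, List.length_range', length_append₂,
            List.length_reverse, List.length_cons]
          omega
        obtain ⟨o₂, o₃, hv₂, hv₃, htr₂, htr₃, hbp₂₃⟩ :=
          chase2 n ((List.range' 2 (ℓ₂+1)).reverse) (J.reverse ++ ((1:ℕ) :: W')) W''
            (2+ℓ₂) 2 (ℓ₂+3)
            hperm2 hnd2 hlast2 hSh hSl hgyd (Or.inr (by omega)) hslen hdne1 hzne1
        refine ⟨revOp (((1:ℕ) :: J) ++ List.range' 2 (ℓ₂+1)), o₂, o₃,
          hval1, hv₂, hv₃, rfl, htr₂, htr₃, ?_⟩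
        rw [htt, htA, happ1]
        rw [hTeq] at hbp1 ⊢
        omega

  · -- q ≥ 2
    -- o₁ : reverse the block [1..q]
    have hqn : q ≤ n := by
      have : (v :: R).length = R.length + 1 := by simp
      omega
    obtain ⟨hval1, happ1, hbp1⟩ :=
      rev_leaf (n := n) (List.range' 1 q) (v :: R)
        (by rw [length_append₂, List.length_range']; omega)
        (by rw [List.length_range']; omega) hblockh hblockl rfl
    have hg1v : g 1 v = 1 := g_eq_one (by omega) (by omega)
    have hgqv : g q v = 1 := g_eq_one (by omega) (by omega)
    -- locate q+1 in v :: R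
    have hq1m : q + 1 ∈ 1 :: u := mem_of_bounds hperm (by omega) (by omega)
    have hq1D : q + 1 ∈ v :: R := by
      rcases List.mem_append.mp (hdq ▸ hq1m) with h | h
      · exfalso; rw [List.mem_range'_1] at h; omega
      · exact h
    obtain ⟨E, F, hEF⟩ := List.append_of_mem hq1D
    have hEne : E ≠ [] := by
      intro h
      rw [h] at hEF
      simp at hEF
      omega
    have hhdEF : (E ++ (q+1) :: F).head? = some v := by
      rw [← hEF]; rfl
    -- chase2 on the reversed-block permutation
    have hTperm : ((List.range' 1 q).reverse ++ (E ++ (q+1) :: F)).Perm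
        (List.range' 1 (n+1)) := by
      rw [← hEF]
      exact (perm_rev_append _ _).trans (hdq ▸ hperm)
    have hTnd : ((List.range' 1 q).reverse ++ (E ++ (q+1) :: F)).Nodup :=
      hTperm.symm.nodup (List.nodup_range' (s := 1) (n := n+1))
    have hTlast : ((List.range' 1 q).reverse ++ (E ++ (q+1) :: F)).getLast?
        = some (n+1) := by
      rw [getLast?_append_right (by simp), ← hEF]
      rw [hdq, getLast?_append_right (by simp)] at hlast
      exact hlast
    have hSh : ((List.range' 1 q).reverse).head? = some q := by
      rw [List.head?_reverse, hblockl]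
    have hSl : ((List.range' 1 q).reverse).getLast? = some 1 := by
      rw [List.getLast?_reverse, hblockh]
    have hgyd : ∀ d ∈ (E ++ (q+1) :: F).head?, g 1 d = 1 := by
      intro d hd
      rw [hhdEF] at hd
      have : v = d := by simpa using hd
      subst this
      exact hg1v
    have hdne1 : ∀ d ∈ (E ++ (q+1) :: F).head?, d ≠ 1 := by
      intro d hd
      rw [hhdEF] at hd
      have : v = d := by simpa using hd
      omega
    have hzne1 : ∀ z ∈ ((List.range' 1 q).reverse ++ E).getLast?, z ≠ 1 := by
      intro z hz
      rw [getLast?_append_right hEne] at hz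
      have hzE : z ∈ E := mem_of_getLast' hz
      have hzD : z ∈ v :: R := by rw [hEF]; exact List.mem_append_left _ hzE
      have h1b : (1:ℕ) ∈ List.range' 1 q := by rw [List.mem_range'_1]; omega
      exact (ne_of_append_nodup (hdq ▸ hnd) h1b hzD).symm
    have hslen : 2 ≤ ((List.range' 1 q).reverse).length + E.length := by
      rw [List.length_reverse, List.length_range']
      omega
    obtain ⟨o₂, o₃, hv₂, hv₃, htr₂, htr₃, hbp₂₃⟩ :=
      chase2 n ((List.range' 1 q).reverse) E F q 1 (q+1)
        hTperm hTnd hTlast hSh hSl hgyd (Or.inr rfl) hslen hdne1 hzne1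
    refine ⟨revOp (List.range' 1 q), o₂, o₃, hval1, hv₂, hv₃, rfl, htr₂, htr₃, ?_⟩
    rw [hdq, happ1, hEF]
    rw [hg1v, hgqv] at hbp1
    rw [hEF] at hbp1
    omega

end StmtSix

/-- if `π` is not the identity and `π₁ = 1`, then there are three
operations (each a prefix reversal or a prefix transposition, the first a
prefix reversal) that together remove at least two breakpoints. -/
theorem three_ops_remove_two_breakpoints_of_first_eq_one
    (n : ℕ) (π : List ℕ) (hπ : IsPerm n π)
    (hid : π ≠ List.range (n + 2)) (h1 : π.getD 1 0 = 1) :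
    ∃ o₁ o₂ o₃ : PrefOp,
      o₁.Valid n ∧ o₂.Valid n ∧ o₃.Valid n ∧
      o₁.isRev = true ∧ o₂.isTransrev = false ∧ o₃.isTransrev = false ∧
      bp (o₃.apply (o₂.apply (o₁.apply π))) ≤ bp π - 2 := by
  obtain ⟨o₁, o₂, o₃, h₁, h₂, h₃, h₄, h₅, h₆, h₇⟩ := StmtSix.main_thm n π hπ hid h1
  exact ⟨o₁, o₂, o₃, h₁, h₂, h₃, h₄, h₅, h₆, h₇⟩
end
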